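/- arXiv:2309.11602 — 6 statements merged into one kernel-verified Lean document; each statement's English description precedes it below -/
import Mathlib

section
/- For 1 < i < m, Y_i^{(+)} := P(A_1^{(+)}(i) ∩ Ā_2 ∩ ⋯ ∩ Ā_m) = q_1² p^{m−1} (1 − p^{i−1} − (i−1) q_2 p^{i−2}). -/
open MeasureTheory ProbabilityTheory Finset Filter Asymptotics

/-- `contaminatedEvent X m n` is the event that the block `X n, X (n+1), ..., X (n+m-1)` is
at most `1+1` contaminated: it contains at most one value `+1` and at most one value `-1`
(all remaining entries being `0`, given that the values lie in `{0, +1, -1}`). -/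
def contaminatedEvent {Ω : Type*} (X : ℕ → Ω → ℤ) (m n : ℕ) : Set Ω :=
  {ω | ((Finset.Icc n (n + m - 1)).filter (fun i => X i ω = 1)).card ≤ 1 ∧
       ((Finset.Icc n (n + m - 1)).filter (fun i => X i ω = -1)).card ≤ 1}

/-- The event that `X 1, ..., X m` are all `0` (a pure run). -/
def pureEvent {Ω : Type*} (X : ℕ → Ω → ℤ) (m : ℕ) : Set Ω :=
  {ω | ∀ i ∈ Finset.Icc 1 m, X i ω = 0}

/-- The event that `X i = +1` and all the other entries among `X 1, ..., X m` are `0`. -/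
def plusEvent {Ω : Type*} (X : ℕ → Ω → ℤ) (m i : ℕ) : Set Ω :=
  {ω | X i ω = 1 ∧ ∀ j ∈ Finset.Icc 1 m, j ≠ i → X j ω = 0}

/-- The event that `X i = -1` and all the other entries among `X 1, ..., X m` are `0`. -/
def minusEvent {Ω : Type*} (X : ℕ → Ω → ℤ) (m i : ℕ) : Set Ω :=
  {ω | X i ω = -1 ∧ ∀ j ∈ Finset.Icc 1 m, j ≠ i → X j ω = 0}

/-- The event that `X i = +1`, `X j = -1` and all the other entries among
`X 1, ..., X m` are `0`. -/
def twoEvent {Ω : Type*} (X : ℕ → Ω → ℤ) (m i j : ℕ) : Set Ω :=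
  {ω | X i ω = 1 ∧ X j ω = -1 ∧ ∀ l ∈ Finset.Icc 1 m, l ≠ i → l ≠ j → X l ω = 0}

lemma prod_pattern2 (s : Finset ℕ) (f : ℕ → ENNReal) (a b : ℕ) (ha : a ∈ s) (hb : b ∈ s)
    (hab : a ≠ b) (v w u : ENNReal) (hfa : f a = v) (hfb : f b = w)
    (hother : ∀ j ∈ s, j ≠ a → j ≠ b → f j = u) :
    ∏ j ∈ s, f j = v * w * u ^ (s.card - 2) := by
  rw [← Finset.mul_prod_erase s f ha,
    ← Finset.mul_prod_erase _ f (Finset.mem_erase.mpr ⟨hab.symm, hb⟩)]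
  have hrest : ∏ j ∈ (s.erase a).erase b, f j = u ^ (s.card - 2) := by
    rw [Finset.prod_congr rfl (fun j hj => by
      have hj1 := Finset.mem_erase.mp hj
      have hj2 := Finset.mem_erase.mp hj1.2
      exact hother j hj2.2 hj2.1 hj1.1), Finset.prod_const,
      Finset.card_erase_of_mem (Finset.mem_erase.mpr ⟨hab.symm, hb⟩),
      Finset.card_erase_of_mem ha]
    congr 1
  rw [hrest, hfa, hfb, mul_assoc]

lemma prod_pattern3 (s : Finset ℕ) (f : ℕ → ENNReal) (a b c : ℕ) (ha : a ∈ s) (hb : b ∈ s)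
    (hc : c ∈ s) (hab : a ≠ b) (hac : a ≠ c) (hbc : b ≠ c) (v w z u : ENNReal)
    (hfa : f a = v) (hfb : f b = w) (hfc : f c = z)
    (hother : ∀ j ∈ s, j ≠ a → j ≠ b → j ≠ c → f j = u) :
    ∏ j ∈ s, f j = v * w * z * u ^ (s.card - 3) := by
  rw [← Finset.mul_prod_erase s f ha,
    ← Finset.mul_prod_erase _ f (Finset.mem_erase.mpr ⟨hab.symm, hb⟩),
    ← Finset.mul_prod_erase _ f (Finset.mem_erase.mpr ⟨hbc.symm,
        Finset.mem_erase.mpr ⟨hac.symm, hc⟩⟩)]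
  have hrest : ∏ j ∈ ((s.erase a).erase b).erase c, f j = u ^ (s.card - 3) := by
    rw [Finset.prod_congr rfl (fun j hj => by
      have hj1 := Finset.mem_erase.mp hj
      have hj2 := Finset.mem_erase.mp hj1.2
      have hj3 := Finset.mem_erase.mp hj2.2
      exact hother j hj3.2 hj3.1 hj2.1 hj1.1), Finset.prod_const,
      Finset.card_erase_of_mem (Finset.mem_erase.mpr ⟨hbc.symm,
        Finset.mem_erase.mpr ⟨hac.symm, hc⟩⟩),
      Finset.card_erase_of_mem (Finset.mem_erase.mpr ⟨hab.symm, hb⟩),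
      Finset.card_erase_of_mem ha]
    congr 1
  rw [hrest, hfa, hfb, hfc, mul_assoc, mul_assoc, ← mul_assoc w]

theorem Y_plus_middle
    {Ω : Type*} [MeasurableSpace Ω] (P : Measure Ω) [IsProbabilityMeasure P]
    (X : ℕ → Ω → ℤ) (hmeas : ∀ i, Measurable (X i))
    (hindep : iIndepFun X P)
    (p q1 q2 : ℝ) (hp : 0 < p) (hq1 : 0 < q1) (hq2 : 0 < q2) (hsum : p + q1 + q2 = 1)
    (h0 : ∀ i, P {ω | X i ω = 0} = ENNReal.ofReal p)
    (h1 : ∀ i, P {ω | X i ω = 1} = ENNReal.ofReal q1)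
    (h2 : ∀ i, P {ω | X i ω = -1} = ENNReal.ofReal q2)
    (hval : ∀ i ω, X i ω = 0 ∨ X i ω = 1 ∨ X i ω = -1)
    (m i : ℕ) (hm : 2 ≤ m) (hi1 : 1 < i) (him : i < m) :
    (P (plusEvent X m i ∩ ⋂ n ∈ Finset.Icc 2 m, (contaminatedEvent X m n)ᶜ)).toReal =
      q1 ^ 2 * p ^ (m - 1) * (1 - p ^ (i - 1) - ((i : ℝ) - 1) * q2 * p ^ (i - 2)) := by
  classical
  have hms : ∀ (j : ℕ) (c : ℤ), MeasurableSet {ω | X j ω = c} := fun j c =>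
    hmeas j (measurableSet_singleton c)
  have hprob : ∀ (s : Finset ℕ) (c : ℕ → ℤ),
      P (⋂ j ∈ s, {ω | X j ω = c j}) = ∏ j ∈ s, P {ω | X j ω = c j} := fun s c =>
    hindep.meas_biInter (fun j _ => ⟨{c j}, measurableSet_singleton _, rfl⟩)
  set W : Finset ℕ := Finset.Icc (m + 2) (m + i) with hW
  set c0 : ℕ → ℤ := fun j => if j = i ∨ j = m + 1 then 1 else 0 with hc0
  set ck : ℕ → ℕ → ℤ :=
    fun k j => if j = i ∨ j = m + 1 then 1 else if j = k then -1 else 0 with hck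
  have hc0_one : ∀ j, (j = i ∨ j = m + 1) → c0 j = 1 := fun j h => by
    simp only [hc0]; rw [if_pos h]
  have hc0_zero : ∀ j, j ≠ i → j ≠ m + 1 → c0 j = 0 := fun j hj1 hj2 => by
    simp only [hc0]; rw [if_neg (by tauto)]
  have hck_one : ∀ k j, (j = i ∨ j = m + 1) → ck k j = 1 := fun k j h => by
    simp only [hck]; rw [if_pos h]
  have hck_neg : ∀ k j, j ≠ i → j ≠ m + 1 → j = k → ck k j = -1 := fun k j h1' h2' h3 => by
    simp only [hck]; rw [if_neg (by tauto), if_pos h3]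
  have hck_zero : ∀ k j, j ≠ i → j ≠ m + 1 → j ≠ k → ck k j = 0 := fun k j h1' h2' h3 => by
    simp only [hck]; rw [if_neg (by tauto), if_neg h3]
  set Efull : Set Ω := ⋂ j ∈ Finset.Icc 1 (m + 1), {ω | X j ω = c0 j} with hEfull
  set Ppat : Set Ω := ⋂ j ∈ Finset.Icc 1 (m + i), {ω | X j ω = c0 j} with hPpat
  set Qpat : ℕ → Set Ω := fun k => ⋂ j ∈ Finset.Icc 1 (m + i), {ω | X j ω = ck k j} with hQpat
  -- the key set identity
  have hset : plusEvent X m i ∩ ⋂ n ∈ Finset.Icc 2 m, (contaminatedEvent X m n)ᶜ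
      = Efull \ (Ppat ∪ ⋃ k ∈ W, Qpat k) := by
    ext ω
    constructor
    · rintro ⟨⟨hxi, hz⟩, hA⟩
      have hA' : ∀ n, 2 ≤ n → n ≤ m → ω ∉ contaminatedEvent X m n := fun n hn1 hn2 =>
        Set.mem_iInter₂.mp hA n (Finset.mem_Icc.mpr ⟨hn1, hn2⟩)
      -- Step 1: X (m+1) ω = 1
      have hxm1 : X (m + 1) ω = 1 := by
        by_contra hne
        refine hA' 2 le_rfl hm ⟨?_, ?_⟩
        · apply Finset.card_le_one.mpr
          intro a ha b hb
          have ha' := Finset.mem_filter.mp ha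
          have hb' := Finset.mem_filter.mp hb
          have haux : ∀ x, x ∈ Finset.Icc 2 (2 + m - 1) → X x ω = 1 → x = i := by
            intro x hx hx1
            have hx' := Finset.mem_Icc.mp hx
            by_contra hxi'
            rcases Nat.lt_or_ge x (m + 1) with h | h
            · have := hz x (Finset.mem_Icc.mpr ⟨by omega, by omega⟩) hxi'
              rw [this] at hx1; exact absurd hx1 (by norm_num)
            · have hxm : x = m + 1 := by omega
              rw [hxm] at hx1; exact hne hx1
          rw [haux a ha'.1 ha'.2, haux b hb'.1 hb'.2]
        · apply Finset.card_le_one.mpr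
          intro a ha b hb
          have ha' := Finset.mem_filter.mp ha
          have hb' := Finset.mem_filter.mp hb
          have haux : ∀ x, x ∈ Finset.Icc 2 (2 + m - 1) → X x ω = -1 → x = m + 1 := by
            intro x hx hx1
            have hx' := Finset.mem_Icc.mp hx
            by_contra hxm
            rcases eq_or_ne x i with rfl | hxi'
            · rw [hxi] at hx1; exact absurd hx1 (by norm_num)
            · have := hz x (Finset.mem_Icc.mpr ⟨by omega, by omega⟩) hxi'
              rw [this] at hx1; exact absurd hx1 (by norm_num)
          rw [haux a ha'.1 ha'.2, haux b hb'.1 hb'.2]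
      refine ⟨?_, ?_⟩
      · -- ω ∈ Efull
        apply Set.mem_iInter₂.mpr
        intro j hj
        have hj' := Finset.mem_Icc.mp hj
        rcases eq_or_ne j i with rfl | hji
        · show X j ω = c0 j; rw [hc0_one j (Or.inl rfl)]; exact hxi
        · rcases eq_or_ne j (m + 1) with rfl | hjm
          · show X (m + 1) ω = c0 (m + 1); rw [hc0_one (m + 1) (Or.inr rfl)]; exact hxm1
          · show X j ω = c0 j
            rw [hc0_zero j hji hjm]
            exact hz j (Finset.mem_Icc.mpr ⟨hj'.1, by omega⟩) hji
      · -- ω is not in Ppat ∪ ⋃ Qpat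
        intro hU
        -- in either case, the values of X on Icc 1 (m+i) follow a pattern d with at most
        -- one -1 (at some k0) and with +1 only at i or m+1
        obtain ⟨d, hd, ⟨k0, hk0⟩, hdplus⟩ :
            ∃ d : ℕ → ℤ, (∀ x ∈ Finset.Icc 1 (m + i), X x ω = d x) ∧
              (∃ k0, ∀ x, d x = -1 → x = k0) ∧ (∀ x, d x = 1 → x = i ∨ x = m + 1) := by
          rcases hU with hP | hQ
          · refine ⟨c0, fun x hx => Set.mem_iInter₂.mp hP x hx, ⟨0, ?_⟩, ?_⟩
            · intro x hx
              by_cases hc : x = i ∨ x = m + 1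
              · rw [hc0_one x hc] at hx; exact absurd hx (by norm_num)
              · push_neg at hc
                rw [hc0_zero x hc.1 hc.2] at hx; exact absurd hx (by norm_num)
            · intro x hx
              by_cases hc : x = i ∨ x = m + 1
              · exact hc
              · push_neg at hc
                rw [hc0_zero x hc.1 hc.2] at hx; exact absurd hx (by norm_num)
          · obtain ⟨k, hk, hQk⟩ := Set.mem_iUnion₂.mp hQ
            refine ⟨ck k, fun x hx => Set.mem_iInter₂.mp hQk x hx, ⟨k, ?_⟩, ?_⟩
            · intro x hx
              by_cases hc : x = i ∨ x = m + 1
              · rw [hck_one k x hc] at hx; exact absurd hx (by norm_num)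
              · push_neg at hc
                by_cases hxk : x = k
                · exact hxk
                · rw [hck_zero k x hc.1 hc.2 hxk] at hx; exact absurd hx (by norm_num)
            · intro x hx
              by_cases hc : x = i ∨ x = m + 1
              · exact hc
              · push_neg at hc
                by_cases hxk : x = k
                · rw [hck_neg k x hc.1 hc.2 hxk] at hx; exact absurd hx (by norm_num)
                · rw [hck_zero k x hc.1 hc.2 hxk] at hx; exact absurd hx (by norm_num)
        -- the block starting at i+1 is then at most 1+1 contaminated, contradiction
        refine hA' (i + 1) (by omega) (by omega) ⟨?_, ?_⟩
        · apply Finset.card_le_one.mpr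
          intro a ha b hb
          have ha' := Finset.mem_filter.mp ha
          have hb' := Finset.mem_filter.mp hb
          have haux : ∀ x, x ∈ Finset.Icc (i + 1) (i + 1 + m - 1) → X x ω = 1 → x = m + 1 := by
            intro x hx hx1
            have hx' := Finset.mem_Icc.mp hx
            have hdx : d x = 1 := by
              rw [← hd x (Finset.mem_Icc.mpr ⟨by omega, by omega⟩)]; exact hx1
            rcases hdplus x hdx with h | h
            · omega
            · exact h
          rw [haux a ha'.1 ha'.2, haux b hb'.1 hb'.2]
        · apply Finset.card_le_one.mpr
          intro a ha b hb
          have ha' := Finset.mem_filter.mp ha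
          have hb' := Finset.mem_filter.mp hb
          have haux : ∀ x, x ∈ Finset.Icc (i + 1) (i + 1 + m - 1) → X x ω = -1 → x = k0 := by
            intro x hx hx1
            have hx' := Finset.mem_Icc.mp hx
            have hdx : d x = -1 := by
              rw [← hd x (Finset.mem_Icc.mpr ⟨by omega, by omega⟩)]; exact hx1
            exact hk0 x hdx
          rw [haux a ha'.1 ha'.2, haux b hb'.1 hb'.2]
    · rintro ⟨hE, hU⟩
      have hEx : ∀ j, 1 ≤ j → j ≤ m + 1 → X j ω = c0 j := fun j hj1 hj2 =>
        Set.mem_iInter₂.mp hE j (Finset.mem_Icc.mpr ⟨hj1, hj2⟩)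
      have hxi : X i ω = 1 := by
        have := hEx i (by omega) (by omega); rwa [hc0_one i (Or.inl rfl)] at this
      have hxm1 : X (m + 1) ω = 1 := by
        have := hEx (m + 1) (by omega) le_rfl; rwa [hc0_one (m + 1) (Or.inr rfl)] at this
      have hzother : ∀ j ∈ Finset.Icc 1 m, j ≠ i → X j ω = 0 := by
        intro j hj hji
        have hj' := Finset.mem_Icc.mp hj
        have := hEx j hj'.1 (by omega)
        rwa [hc0_zero j hji (by omega)] at this
      -- key claim: in W there is a +1 or two distinct -1's
      have hkey : (∃ k ∈ W, X k ω = 1) ∨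
          (∃ k ∈ W, ∃ l ∈ W, k ≠ l ∧ X k ω = -1 ∧ X l ω = -1) := by
        by_cases hplus : ∃ k ∈ W, X k ω = 1
        · exact Or.inl hplus
        push_neg at hplus
        set S : Finset ℕ := W.filter (fun k => X k ω = -1) with hS
        rcases Nat.lt_or_ge 1 S.card with hS2 | hS1
        · obtain ⟨a, haS, b, hbS, hab⟩ := Finset.one_lt_card.mp hS2
          have ha' := Finset.mem_filter.mp haS
          have hb' := Finset.mem_filter.mp hbS
          exact Or.inr ⟨a, ha'.1, b, hb'.1, hab, ha'.2, hb'.2⟩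
        · exfalso
          have hWzero : ∀ k ∈ W, k ∉ S → X k ω = 0 := by
            intro k hk hkS
            rcases hval k ω with h | h | h
            · exact h
            · exact absurd h (hplus k hk)
            · exact absurd (Finset.mem_filter.mpr ⟨hk, h⟩) hkS
          rcases S.eq_empty_or_nonempty with hSe | ⟨k, hkS⟩
          · -- ω ∈ Ppat
            apply hU
            apply Set.mem_union_left
            apply Set.mem_iInter₂.mpr
            intro j hj
            have hj' := Finset.mem_Icc.mp hj
            rcases Nat.lt_or_ge j (m + 2) with h | h
            · exact hEx j hj'.1 (by omega)
            · show X j ω = c0 j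
              rw [hc0_zero j (by omega) (by omega)]
              exact hWzero j (Finset.mem_Icc.mpr ⟨h, hj'.2⟩) (by rw [hSe]; simp)
          · -- ω ∈ Qpat k
            have hk' := Finset.mem_filter.mp hkS
            have hkW := hk'.1
            have hkW' := Finset.mem_Icc.mp hkW
            apply hU
            apply Set.mem_union_right
            apply Set.mem_iUnion₂.mpr
            refine ⟨k, hkW, ?_⟩
            apply Set.mem_iInter₂.mpr
            intro j hj
            have hj' := Finset.mem_Icc.mp hj
            show X j ω = ck k j
            rcases Nat.lt_or_ge j (m + 2) with h | h
            · by_cases hc : j = i ∨ j = m + 1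
              · rw [hck_one k j hc]
                rcases hc with rfl | rfl
                · exact hxi
                · exact hxm1
              · push_neg at hc
                rw [hck_zero k j hc.1 hc.2 (by omega)]
                exact hzother j (Finset.mem_Icc.mpr ⟨hj'.1, by omega⟩) hc.1
            · have hjW : j ∈ W := Finset.mem_Icc.mpr ⟨h, hj'.2⟩
              by_cases hjk : j = k
              · rw [hck_neg k j (by omega) (by omega) hjk, hjk]
                exact hk'.2
              · rw [hck_zero k j (by omega) (by omega) hjk]
                apply hWzero j hjW
                intro hjS
                exact hjk (Finset.card_le_one.mp hS1 j hjS k hkS)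
      refine ⟨⟨hxi, hzother⟩, ?_⟩
      apply Set.mem_iInter₂.mpr
      intro n hn
      have hn' := Finset.mem_Icc.mp hn
      intro hcon
      obtain ⟨hcp, hcm⟩ := hcon
      rcases le_or_gt n i with hni | hni
      · -- i and m+1 are two +1's in the window
        have h1m : 1 < ((Finset.Icc n (n + m - 1)).filter (fun x => X x ω = 1)).card := by
          apply Finset.one_lt_card.mpr
          refine ⟨i, Finset.mem_filter.mpr ⟨Finset.mem_Icc.mpr ⟨by omega, by omega⟩, hxi⟩,
            m + 1, Finset.mem_filter.mpr ⟨Finset.mem_Icc.mpr ⟨by omega, by omega⟩, hxm1⟩,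
            by omega⟩
        omega
      · rcases hkey with ⟨k, hkW, hk1⟩ | ⟨k, hkW, l, hlW, hkl, hk1, hl1⟩
        · have hkW' := Finset.mem_Icc.mp hkW
          have h1m : 1 < ((Finset.Icc n (n + m - 1)).filter (fun x => X x ω = 1)).card := by
            apply Finset.one_lt_card.mpr
            refine ⟨m + 1, Finset.mem_filter.mpr ⟨Finset.mem_Icc.mpr ⟨by omega, by omega⟩, hxm1⟩,
              k, Finset.mem_filter.mpr ⟨Finset.mem_Icc.mpr ⟨by omega, by omega⟩, hk1⟩,
              by omega⟩
          omega
        · have hkW' := Finset.mem_Icc.mp hkW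
          have hlW' := Finset.mem_Icc.mp hlW
          have h1m : 1 < ((Finset.Icc n (n + m - 1)).filter (fun x => X x ω = -1)).card := by
            apply Finset.one_lt_card.mpr
            refine ⟨k, Finset.mem_filter.mpr ⟨Finset.mem_Icc.mpr ⟨by omega, by omega⟩, hk1⟩,
              l, Finset.mem_filter.mpr ⟨Finset.mem_Icc.mpr ⟨by omega, by omega⟩, hl1⟩, hkl⟩
          omega
  -- measurability
  have hmE : MeasurableSet Efull :=
    Finset.measurableSet_biInter _ (fun j _ => hms j (c0 j))
  have hmP : MeasurableSet Ppat :=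
    Finset.measurableSet_biInter _ (fun j _ => hms j (c0 j))
  have hmQ : ∀ k, MeasurableSet (Qpat k) := fun k =>
    Finset.measurableSet_biInter _ (fun j _ => hms j (ck k j))
  have hmU : MeasurableSet (⋃ k ∈ W, Qpat k) :=
    Finset.measurableSet_biUnion _ (fun k _ => hmQ k)
  -- subset
  have hsubU : Ppat ∪ ⋃ k ∈ W, Qpat k ⊆ Efull := by
    intro ω hω
    apply Set.mem_iInter₂.mpr
    intro j hj
    have hj' := Finset.mem_Icc.mp hj
    have hjmem : j ∈ Finset.Icc 1 (m + i) := Finset.mem_Icc.mpr ⟨hj'.1, by omega⟩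
    rcases hω with hP | hQ
    · exact Set.mem_iInter₂.mp hP j hjmem
    · obtain ⟨k, hk, hQk⟩ := Set.mem_iUnion₂.mp hQ
      have hkW' := Finset.mem_Icc.mp hk
      have := Set.mem_iInter₂.mp hQk j hjmem
      show X j ω = c0 j
      by_cases hc : j = i ∨ j = m + 1
      · rw [hc0_one j hc]; rwa [hck_one k j hc] at this
      · push_neg at hc
        rw [hc0_zero j hc.1 hc.2]
        rwa [hck_zero k j hc.1 hc.2 (by omega)] at this
  -- disjointness
  have hdisjPQ : ∀ k ∈ W, Disjoint Ppat (Qpat k) := by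
    intro k hk
    have hk' := Finset.mem_Icc.mp hk
    rw [Set.disjoint_left]
    intro ω hω1 hω2
    have hkmem : k ∈ Finset.Icc 1 (m + i) := Finset.mem_Icc.mpr ⟨by omega, hk'.2⟩
    have e1 : X k ω = c0 k := Set.mem_iInter₂.mp hω1 k hkmem
    have e2 : X k ω = ck k k := Set.mem_iInter₂.mp hω2 k hkmem
    rw [hc0_zero k (by omega) (by omega)] at e1
    rw [hck_neg k k (by omega) (by omega) rfl] at e2
    rw [e1] at e2
    exact absurd e2 (by norm_num)
  have hdisj : Disjoint Ppat (⋃ k ∈ W, Qpat k) := by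
    rw [Set.disjoint_left]
    intro ω hω1 hω2
    obtain ⟨k, hk, hQk⟩ := Set.mem_iUnion₂.mp hω2
    exact Set.disjoint_left.mp (hdisjPQ k hk) hω1 hQk
  have hpair : Set.PairwiseDisjoint (↑W) Qpat := by
    intro k hk l hl hkl
    have hk' := Finset.mem_Icc.mp (Finset.mem_coe.mp hk)
    have hl' := Finset.mem_Icc.mp (Finset.mem_coe.mp hl)
    simp only [Function.onFun]
    rw [Set.disjoint_left]
    intro ω hω1 hω2
    have hkmem : k ∈ Finset.Icc 1 (m + i) := Finset.mem_Icc.mpr ⟨by omega, hk'.2⟩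
    have e1 : X k ω = ck k k := Set.mem_iInter₂.mp hω1 k hkmem
    have e2 : X k ω = ck l k := Set.mem_iInter₂.mp hω2 k hkmem
    rw [hck_neg k k (by omega) (by omega) rfl] at e1
    rw [hck_zero l k (by omega) (by omega) hkl] at e2
    rw [e1] at e2
    exact absurd e2 (by norm_num)
  -- probabilities of the patterns
  have hPE : P Efull = ENNReal.ofReal q1 * ENNReal.ofReal q1 * ENNReal.ofReal p ^ (m - 1) := by
    rw [hEfull, hprob]
    have hcard : (Finset.Icc 1 (m + 1)).card - 2 = m - 1 := by
      rw [Nat.card_Icc]; omega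
    rw [← hcard]
    apply prod_pattern2 _ _ i (m + 1) (Finset.mem_Icc.mpr ⟨by omega, by omega⟩)
      (Finset.mem_Icc.mpr ⟨by omega, le_rfl⟩) (by omega)
    · rw [hc0_one i (Or.inl rfl)]; exact h1 i
    · rw [hc0_one (m + 1) (Or.inr rfl)]; exact h1 (m + 1)
    · intro j hj hji hjm
      rw [hc0_zero j hji hjm]; exact h0 j
  have hPP : P Ppat = ENNReal.ofReal q1 * ENNReal.ofReal q1 * ENNReal.ofReal p ^ (m + i - 2) := by
    rw [hPpat, hprob]
    have hcard : (Finset.Icc 1 (m + i)).card - 2 = m + i - 2 := by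
      rw [Nat.card_Icc]; omega
    rw [← hcard]
    apply prod_pattern2 _ _ i (m + 1) (Finset.mem_Icc.mpr ⟨by omega, by omega⟩)
      (Finset.mem_Icc.mpr ⟨by omega, by omega⟩) (by omega)
    · rw [hc0_one i (Or.inl rfl)]; exact h1 i
    · rw [hc0_one (m + 1) (Or.inr rfl)]; exact h1 (m + 1)
    · intro j hj hji hjm
      rw [hc0_zero j hji hjm]; exact h0 j
  have hPQ : ∀ k ∈ W, P (Qpat k) = ENNReal.ofReal q1 * ENNReal.ofReal q1 *
      ENNReal.ofReal q2 * ENNReal.ofReal p ^ (m + i - 3) := by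
    intro k hk
    have hk' := Finset.mem_Icc.mp hk
    rw [hQpat]
    simp only
    rw [hprob]
    have hcard : (Finset.Icc 1 (m + i)).card - 3 = m + i - 3 := by
      rw [Nat.card_Icc]; omega
    rw [← hcard]
    apply prod_pattern3 _ _ i (m + 1) k (Finset.mem_Icc.mpr ⟨by omega, by omega⟩)
      (Finset.mem_Icc.mpr ⟨by omega, by omega⟩) (Finset.mem_Icc.mpr ⟨by omega, by omega⟩)
      (by omega) (by omega) (by omega)
    · rw [hck_one k i (Or.inl rfl)]; exact h1 i
    · rw [hck_one k (m + 1) (Or.inr rfl)]; exact h1 (m + 1)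
    · rw [hck_neg k k (by omega) (by omega) rfl]; exact h2 k
    · intro j hj hji hjm hjk
      rw [hck_zero k j hji hjm hjk]; exact h0 j
  have hsumQ : ∑ k ∈ W, P (Qpat k) = (i - 1 : ℕ) * (ENNReal.ofReal q1 * ENNReal.ofReal q1 *
      ENNReal.ofReal q2 * ENNReal.ofReal p ^ (m + i - 3)) := by
    rw [Finset.sum_congr rfl hPQ, Finset.sum_const, nsmul_eq_mul]
    congr 1
    rw [hW, Nat.card_Icc]
    norm_cast
    omega
  have hPsplit : P (Ppat ∪ ⋃ k ∈ W, Qpat k) = P Ppat + ∑ k ∈ W, P (Qpat k) := by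
    rw [measure_union hdisj hmU, measure_biUnion_finset hpair (fun k _ => hmQ k)]
  have hle : P (Ppat ∪ ⋃ k ∈ W, Qpat k) ≤ P Efull := measure_mono hsubU
  have hfin1 : ENNReal.ofReal q1 * ENNReal.ofReal q1 * ENNReal.ofReal p ^ (m + i - 2) ≠ ⊤ :=
    ENNReal.mul_ne_top (ENNReal.mul_ne_top ENNReal.ofReal_ne_top ENNReal.ofReal_ne_top)
      (ENNReal.pow_ne_top ENNReal.ofReal_ne_top)
  have hfin2 : ((i - 1 : ℕ) : ENNReal) * (ENNReal.ofReal q1 * ENNReal.ofReal q1 *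
      ENNReal.ofReal q2 * ENNReal.ofReal p ^ (m + i - 3)) ≠ ⊤ :=
    ENNReal.mul_ne_top (ENNReal.natCast_ne_top _)
      (ENNReal.mul_ne_top (ENNReal.mul_ne_top
        (ENNReal.mul_ne_top ENNReal.ofReal_ne_top ENNReal.ofReal_ne_top)
        ENNReal.ofReal_ne_top) (ENNReal.pow_ne_top ENNReal.ofReal_ne_top))
  rw [hset, measure_diff hsubU ((hmP.union hmU).nullMeasurableSet) (measure_ne_top P _),
    ENNReal.toReal_sub_of_le hle (measure_ne_top P _), hPsplit, hPE, hPP, hsumQ,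
    ENNReal.toReal_add hfin1 hfin2]
  simp only [ENNReal.toReal_mul, ENNReal.toReal_pow, ENNReal.toReal_ofReal hq1.le,
    ENNReal.toReal_ofReal hp.le, ENNReal.toReal_ofReal hq2.le, ENNReal.toReal_natCast]
  have e1 : m + i - 2 = (m - 1) + (i - 1) := by omega
  have e2 : m + i - 3 = (m - 1) + (i - 2) := by omega
  have e3 : ((i - 1 : ℕ) : ℝ) = (i : ℝ) - 1 := by
    rw [Nat.cast_sub (by omega : 1 ≤ i), Nat.cast_one]
  rw [e1, e2, e3, pow_add, pow_add]
  ring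
end

section
/- Y_m^{(+)} := P(A_1^{(+)}(m) ∩ Ā_2 ∩ ⋯ ∩ Ā_m) = q_1² p^{m−1}. -/
open MeasureTheory ProbabilityTheory Finset Filter Asymptotics

theorem Y_plus_last
    {Ω : Type*} [MeasurableSpace Ω] (P : Measure Ω) [IsProbabilityMeasure P]
    (X : ℕ → Ω → ℤ) (hmeas : ∀ i, Measurable (X i))
    (hindep : iIndepFun X P)
    (p q1 q2 : ℝ) (hp : 0 < p) (hq1 : 0 < q1) (hq2 : 0 < q2) (hsum : p + q1 + q2 = 1)
    (h0 : ∀ i, P {ω | X i ω = 0} = ENNReal.ofReal p)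
    (h1 : ∀ i, P {ω | X i ω = 1} = ENNReal.ofReal q1)
    (h2 : ∀ i, P {ω | X i ω = -1} = ENNReal.ofReal q2)
    (hval : ∀ i ω, X i ω = 0 ∨ X i ω = 1 ∨ X i ω = -1)
    (m : ℕ) (hm : 2 ≤ m) :
    (P (plusEvent X m m ∩ ⋂ n ∈ Finset.Icc 2 m, (contaminatedEvent X m n)ᶜ)).toReal = q1 ^ 2 * p ^ (m - 1) := by
  have hm1 : 1 ≤ m := le_trans one_le_two hm
  -- the key set identity
  have hset : plusEvent X m m ∩ ⋂ n ∈ Finset.Icc 2 m, (contaminatedEvent X m n)ᶜ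
      = ⋂ i ∈ Finset.Icc 1 (m + 1), X i ⁻¹' {if m ≤ i then 1 else 0} := by
    ext ω
    simp only [Set.mem_inter_iff, Set.mem_iInter, Set.mem_compl_iff, Set.mem_preimage,
      Set.mem_singleton_iff, plusEvent, contaminatedEvent, Set.mem_setOf_eq, Finset.mem_Icc]
    constructor
    · rintro ⟨⟨hXm, hzero⟩, hbar⟩
      -- first derive X (m+1) ω = 1 from the failure of contamination for n = 2
      have hA2 := hbar 2 ⟨le_refl 2, hm⟩
      have hm1' : 2 + m - 1 = m + 1 := by omega
      rw [hm1'] at hA2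
      have hXm1 : X (m + 1) ω = 1 := by
        by_contra hne
        apply hA2
        constructor
        · have hfil : ((Finset.Icc 2 (m + 1)).filter (fun i => X i ω = 1)) = {m} := by
            ext i
            simp only [Finset.mem_filter, Finset.mem_Icc, Finset.mem_singleton]
            constructor
            · rintro ⟨⟨hi2, hi⟩, hXi⟩
              by_contra him
              have : i ≠ m + 1 := by
                intro h; exact hne (h ▸ hXi)
              have : X i ω = 0 := hzero i ⟨by omega, by omega⟩ him
              omega
            · rintro rfl; exact ⟨⟨hm, by omega⟩, hXm⟩
          rw [hfil]; simp
        · have hfil : ((Finset.Icc 2 (m + 1)).filter (fun i => X i ω = -1)) ⊆ {m + 1} := by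
            intro i hi
            simp only [Finset.mem_filter, Finset.mem_Icc] at hi
            simp only [Finset.mem_singleton]
            obtain ⟨⟨hi2, hi⟩, hXi⟩ := hi
            by_contra him
            have hiM : i ≠ m := by intro h; rw [h, hXm] at hXi; omega
            have : X i ω = 0 := hzero i ⟨by omega, by omega⟩ hiM
            omega
          calc _ ≤ ({m+1} : Finset ℕ).card := Finset.card_le_card hfil
          _ = 1 := Finset.card_singleton _
      intro i hi
      rcases Nat.lt_or_ge i m with him | him
      · rw [if_neg (by omega)]
        exact hzero i ⟨hi.1, by omega⟩ (by omega)
      · rw [if_pos him]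
        rcases Nat.eq_or_lt_of_le him with h | h
        · exact h ▸ hXm
        · have : i = m + 1 := by omega
          exact this ▸ hXm1
    · intro h
      have hXm : X m ω = 1 := by
        have := h m ⟨hm1, by omega⟩; rwa [if_pos le_rfl] at this
      have hXm1 : X (m + 1) ω = 1 := by
        have := h (m + 1) ⟨by omega, le_rfl⟩; rwa [if_pos (by omega)] at this
      refine ⟨⟨hXm, fun j hj hjm => ?_⟩, fun n hn => ?_⟩
      · have := h j ⟨hj.1, by omega⟩
        rwa [if_neg (by omega)] at this
      · -- not contaminated: block [n, n+m-1] contains indices m and m+1, both = 1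
        rintro ⟨hone, _⟩
        have hsub : ({m, m + 1} : Finset ℕ) ⊆
            (Finset.Icc n (n + m - 1)).filter (fun i => X i ω = 1) := by
          intro i hi
          simp only [Finset.mem_insert, Finset.mem_singleton] at hi
          simp only [Finset.mem_filter, Finset.mem_Icc]
          rcases hi with rfl | rfl
          · exact ⟨⟨by omega, by omega⟩, hXm⟩
          · exact ⟨⟨by omega, by omega⟩, hXm1⟩
        have h2le : 2 ≤ ((Finset.Icc n (n + m - 1)).filter (fun i => X i ω = 1)).card := by
          calc 2 = ({m, m + 1} : Finset ℕ).card := by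
                rw [Finset.card_insert_of_notMem (by simp), Finset.card_singleton]
            _ ≤ _ := Finset.card_le_card hsub
        omega
  rw [hset]
  have hmeaseq : ∀ i (c : ℤ), MeasurableSet[MeasurableSpace.comap (X i) inferInstance]
      (X i ⁻¹' {c}) := fun i c => ⟨{c}, measurableSet_singleton c, rfl⟩
  rw [hindep.meas_biInter (fun i _ => hmeaseq i _)]
  have hprod : ∏ i ∈ Finset.Icc 1 (m + 1), P (X i ⁻¹' {if m ≤ i then 1 else 0})
      = ENNReal.ofReal q1 ^ 2 * ENNReal.ofReal p ^ (m - 1) := by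
    have hsplit : Finset.Icc 1 (m + 1) = Finset.Icc 1 (m - 1) ∪ {m, m + 1} := by
      ext i
      simp only [Finset.mem_union, Finset.mem_Icc, Finset.mem_insert, Finset.mem_singleton]
      omega
    have hdisj : Disjoint (Finset.Icc 1 (m - 1)) ({m, m + 1} : Finset ℕ) := by
      simp only [Finset.disjoint_left, Finset.mem_Icc, Finset.mem_insert, Finset.mem_singleton]
      omega
    rw [hsplit, Finset.prod_union hdisj]
    have h1' : ∏ i ∈ Finset.Icc 1 (m - 1), P (X i ⁻¹' {if m ≤ i then 1 else 0})
        = ENNReal.ofReal p ^ (m - 1) := by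
      have hc : ∀ i ∈ Finset.Icc 1 (m - 1),
          P (X i ⁻¹' {if m ≤ i then 1 else 0}) = ENNReal.ofReal p := by
        intro i hi
        simp only [Finset.mem_Icc] at hi
        rw [if_neg (by omega)]
        exact h0 i
      rw [Finset.prod_congr rfl hc, Finset.prod_const, Nat.card_Icc]
      norm_num
    have h2' : ∏ i ∈ ({m, m + 1} : Finset ℕ), P (X i ⁻¹' {if m ≤ i then 1 else 0})
        = ENNReal.ofReal q1 ^ 2 := by
      rw [Finset.prod_insert (by simp), Finset.prod_singleton, if_pos le_rfl,
        if_pos (by omega)]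
      have e1 : X m ⁻¹' {(1 : ℤ)} = {ω | X m ω = 1} := rfl
      have e2 : X (m + 1) ⁻¹' {(1 : ℤ)} = {ω | X (m + 1) ω = 1} := rfl
      rw [e1, e2, h1, h1, sq]
    rw [h1', h2', mul_comm]
  rw [hprod]
  rw [← ENNReal.ofReal_pow hq1.le, ← ENNReal.ofReal_pow hp.le,
    ← ENNReal.ofReal_mul (by positivity), ENNReal.toReal_ofReal (by positivity)]
end

section
/- Y_{1,m} := P(A_1^{(2)}(1,m) ∩ Ā_2 ∩ ⋯ ∩ Ā_m) = q_1 q_2² p^{m−2}. -/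
open MeasureTheory ProbabilityTheory Finset Filter Asymptotics

theorem Y_two_first_last
    {Ω : Type*} [MeasurableSpace Ω] (P : Measure Ω) [IsProbabilityMeasure P]
    (X : ℕ → Ω → ℤ) (hmeas : ∀ i, Measurable (X i))
    (hindep : iIndepFun X P)
    (p q1 q2 : ℝ) (hp : 0 < p) (hq1 : 0 < q1) (hq2 : 0 < q2) (hsum : p + q1 + q2 = 1)
    (h0 : ∀ i, P {ω | X i ω = 0} = ENNReal.ofReal p)
    (h1 : ∀ i, P {ω | X i ω = 1} = ENNReal.ofReal q1)
    (h2 : ∀ i, P {ω | X i ω = -1} = ENNReal.ofReal q2)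
    (hval : ∀ i ω, X i ω = 0 ∨ X i ω = 1 ∨ X i ω = -1)
    (m : ℕ) (hm : 2 ≤ m) :
    (P (twoEvent X m 1 m ∩ ⋂ n ∈ Finset.Icc 2 m, (contaminatedEvent X m n)ᶜ)).toReal = q1 * q2 ^ 2 * p ^ (m - 2) := by
  have h21 : 2 + m - 1 = m + 1 := by omega
  set f : ℕ → ℤ := fun i => if i = 1 then 1 else if i = m then -1 else if i = m + 1 then -1 else 0 with hf
  have hf1 : f 1 = 1 := by simp [hf]
  have hfm : f m = -1 := by simp [hf]; omega
  have hfm1 : f (m+1) = -1 := by simp [hf]; omega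
  have hfz : ∀ i, 2 ≤ i → i ≤ m - 1 → f i = 0 := by
    intro i hi1 hi2; simp only [hf]
    rw [if_neg (by omega), if_neg (by omega), if_neg (by omega)]
  have hset : twoEvent X m 1 m ∩ ⋂ n ∈ Finset.Icc 2 m, (contaminatedEvent X m n)ᶜ
      = ⋂ i ∈ Finset.Icc 1 (m+1), X i ⁻¹' {f i} := by
    ext ω
    simp only [Set.mem_inter_iff, Set.mem_iInter, Set.mem_compl_iff, Set.mem_preimage,
      Set.mem_singleton_iff, twoEvent, Set.mem_setOf_eq, Finset.mem_Icc]
    constructor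
    · rintro ⟨⟨hX1, hXm, hzero⟩, hbar⟩
      have hz : ∀ j, 2 ≤ j → j ≤ m - 1 → X j ω = 0 := by
        intro j hj1 hj2
        exact hzero j ⟨by omega, by omega⟩ (by omega) (by omega)
      have hc := hbar 2 ⟨le_rfl, hm⟩
      simp only [contaminatedEvent, Set.mem_setOf_eq, not_and_or, not_le, h21] at hc
      have hXm1 : X (m+1) ω = -1 := by
        rcases hc with hc | hc
        · exfalso
          have hsub : (Finset.Icc 2 (m+1)).filter (fun i => X i ω = 1) ⊆ {m+1} := by
            intro j hj
            simp only [Finset.mem_filter, Finset.mem_Icc] at hj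
            obtain ⟨⟨hj2, hjm⟩, hj1⟩ := hj
            simp only [Finset.mem_singleton]
            by_contra hne
            rcases eq_or_ne j m with rfl | hjm'
            · rw [hXm] at hj1; exact absurd hj1 (by decide)
            · rw [hz j hj2 (by omega)] at hj1; exact absurd hj1 (by decide)
          have := Finset.card_le_card hsub
          simp at this; omega
        · by_contra hne
          have hsub : (Finset.Icc 2 (m+1)).filter (fun i => X i ω = -1) ⊆ {m} := by
            intro j hj
            simp only [Finset.mem_filter, Finset.mem_Icc] at hj
            obtain ⟨⟨hj2, hjm⟩, hj1⟩ := hj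
            simp only [Finset.mem_singleton]
            by_contra hne'
            rcases eq_or_ne j (m+1) with rfl | hjm'
            · exact hne hj1
            · rw [hz j hj2 (by omega)] at hj1; exact absurd hj1 (by decide)
          have := Finset.card_le_card hsub
          simp at this; omega
      intro i ⟨hi1, hi2⟩
      rcases eq_or_ne i 1 with rfl | h1'
      · rw [hX1, hf1]
      rcases eq_or_ne i m with rfl | hm'
      · rw [hXm, hfm]
      rcases eq_or_ne i (m+1) with rfl | hm1'
      · rw [hXm1, hfm1]
      · rw [hz i (by omega) (by omega), hfz i (by omega) (by omega)]
    · intro h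
      have hX1 : X 1 ω = 1 := by rw [h 1 ⟨le_rfl, by omega⟩, hf1]
      have hXm : X m ω = -1 := by rw [h m ⟨by omega, by omega⟩, hfm]
      have hXm1 : X (m+1) ω = -1 := by rw [h (m+1) ⟨by omega, le_rfl⟩, hfm1]
      refine ⟨⟨hX1, hXm, ?_⟩, ?_⟩
      · intro l ⟨hl1, hl2⟩ hne1 hnem
        rw [h l ⟨hl1, by omega⟩, hfz l (by omega) (by omega)]
      · intro n ⟨hn2, hnm⟩
        simp only [contaminatedEvent, Set.mem_setOf_eq, not_and_or, not_le]
        right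
        have hsub : ({m, m+1} : Finset ℕ) ⊆ (Finset.Icc n (n+m-1)).filter (fun i => X i ω = -1) := by
          intro j hj
          simp only [Finset.mem_insert, Finset.mem_singleton] at hj
          simp only [Finset.mem_filter, Finset.mem_Icc]
          rcases hj with rfl | rfl
          · exact ⟨⟨by omega, by omega⟩, hXm⟩
          · exact ⟨⟨by omega, by omega⟩, hXm1⟩
        have := Finset.card_le_card hsub
        rw [Finset.card_insert_of_notMem (by simp), Finset.card_singleton] at this
        omega
  have hms : ∀ i, MeasurableSet[MeasurableSpace.comap (X i) inferInstance] (X i ⁻¹' {f i}) :=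
    fun i => ⟨{f i}, measurableSet_singleton _, rfl⟩
  rw [hset, hindep.meas_biInter (fun i _ => hms i)]
  have hicc : Finset.Icc 1 (m+1) = insert 1 (insert m (insert (m+1) (Finset.Icc 2 (m-1)))) := by
    ext i
    simp only [Finset.mem_Icc, Finset.mem_insert]
    omega
  have hpre : ∀ i, X i ⁻¹' {f i} = {ω | X i ω = f i} := fun i => rfl
  have hPval : ∀ i, 2 ≤ i → i ≤ m - 1 → P (X i ⁻¹' {f i}) = ENNReal.ofReal p := by
    intro i hi1 hi2
    rw [hpre, hfz i hi1 hi2]; exact h0 i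
  rw [hicc, Finset.prod_insert (by simp only [Finset.mem_insert, Finset.mem_Icc]; omega),
    Finset.prod_insert (by simp only [Finset.mem_insert, Finset.mem_Icc]; omega),
    Finset.prod_insert (by simp only [Finset.mem_Icc]; omega),
    Finset.prod_congr rfl (fun i hi => hPval i (Finset.mem_Icc.mp hi).1 (Finset.mem_Icc.mp hi).2),
    Finset.prod_const, Nat.card_Icc]
  have hcard : m - 1 + 1 - 2 = m - 2 := by omega
  rw [hpre, hpre, hpre, hf1, hfm, hfm1, h1, h2, h2, hcard,
    ← ENNReal.ofReal_pow hp.le, ← ENNReal.ofReal_mul hq2.le, ← ENNReal.ofReal_mul hq2.le,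
    ← ENNReal.ofReal_mul hq1.le, ENNReal.toReal_ofReal (by positivity)]
  ring
end

section
/- For 1 < j < m, Y_{1,j} := P(A_1^{(2)}(1,j) ∩ Ā_2 ∩ ⋯ ∩ Ā_m) = q_1 q_2² p^{m−2} (1 − p^{j−1} − (j−1) q_1 p^{j−2}). -/
open MeasureTheory ProbabilityTheory Finset Filter Asymptotics

private lemma card_filter_le_one' {s : Finset ℕ} {p : ℕ → Prop} [DecidablePred p] {a : ℕ}
    (h : ∀ i ∈ s, p i → i = a) : (s.filter p).card ≤ 1 := by
  refine Finset.card_le_one.mpr fun i hi k hk => ?_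
  simp only [Finset.mem_filter] at hi hk
  rw [h i hi.1 hi.2, h k hk.1 hk.2]

private lemma two_le_card_filter' {s : Finset ℕ} {p : ℕ → Prop} [DecidablePred p] {a b : ℕ}
    (hab : a ≠ b) (ha : a ∈ s) (hb : b ∈ s) (hpa : p a) (hpb : p b) :
    2 ≤ (s.filter p).card := by
  have hsub : ({a, b} : Finset ℕ) ⊆ s.filter p := by
    intro i hi
    simp only [Finset.mem_insert, Finset.mem_singleton] at hi
    rcases hi with rfl | rfl <;> simp [Finset.mem_filter, *]
  calc 2 = ({a, b} : Finset ℕ).card := (Finset.card_pair hab).symm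
    _ ≤ _ := Finset.card_le_card hsub

theorem Y_two_first_middle
    {Ω : Type*} [MeasurableSpace Ω] (P : Measure Ω) [IsProbabilityMeasure P]
    (X : ℕ → Ω → ℤ) (hmeas : ∀ i, Measurable (X i))
    (hindep : iIndepFun X P)
    (p q1 q2 : ℝ) (hp : 0 < p) (hq1 : 0 < q1) (hq2 : 0 < q2) (hsum : p + q1 + q2 = 1)
    (h0 : ∀ i, P {ω | X i ω = 0} = ENNReal.ofReal p)
    (h1 : ∀ i, P {ω | X i ω = 1} = ENNReal.ofReal q1)
    (h2 : ∀ i, P {ω | X i ω = -1} = ENNReal.ofReal q2)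
    (hval : ∀ i ω, X i ω = 0 ∨ X i ω = 1 ∨ X i ω = -1)
    (m j : ℕ) (hm : 2 ≤ m) (hj1 : 1 < j) (hjm : j < m) :
    (P (twoEvent X m 1 j ∩ ⋂ n ∈ Finset.Icc 2 m, (contaminatedEvent X m n)ᶜ)).toReal =
      q1 * q2 ^ 2 * p ^ (m - 2) *
        (1 - p ^ (j - 1) - ((j : ℝ) - 1) * q1 * p ^ (j - 2)) := by
  classical
  set v0 : ℕ → ℤ := fun i => if i = 1 then 1 else if i = j then -1
    else if i = m + 1 then -1 else 0 with hv0def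
  set vk : ℕ → ℕ → ℤ := fun k i => if i = k then 1 else v0 i with hvkdef
  set G : Finset ℕ := Finset.Icc (m + 2) (m + j) with hGdef
  set T : Set Ω := ⋂ i ∈ Finset.Icc 1 (m + 1), {ω | X i ω = v0 i} with hTdef
  set E0 : Set Ω := ⋂ i ∈ Finset.Icc 1 (m + j), {ω | X i ω = v0 i} with hE0def
  set Ek : ℕ → Set Ω := fun k => ⋂ i ∈ Finset.Icc 1 (m + j), {ω | X i ω = vk k i} with hEkdef
  set Er : Set Ω := E0 ∪ ⋃ k ∈ G, Ek k with hErdef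
  -- values of v0
  have hv0_1 : v0 1 = 1 := by simp [hv0def]
  have hv0_j : v0 j = -1 := by simp [hv0def]; omega
  have hv0_m1 : v0 (m + 1) = -1 := by
    have h1' : m + 1 ≠ 1 := by omega
    have h2' : m + 1 ≠ j := by omega
    simp [hv0def, h1', h2']; omega
  have hv0_z : ∀ i, i ≠ 1 → i ≠ j → i ≠ m + 1 → v0 i = 0 := by
    intro i hi1 hij him
    simp [hv0def, hi1, hij, him]
  -- the key set identity
  have key : twoEvent X m 1 j ∩ ⋂ n ∈ Finset.Icc 2 m, (contaminatedEvent X m n)ᶜ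
      = T \ Er := by
    ext ω
    simp only [hTdef, hErdef, hE0def, hEkdef, twoEvent, contaminatedEvent,
      Set.mem_inter_iff, Set.mem_setOf_eq, Set.mem_iInter, Set.mem_compl_iff,
      Set.mem_diff, Set.mem_union, Set.mem_iUnion, exists_prop]
    constructor
    · rintro ⟨⟨hx1, hxj, hz⟩, hA⟩
      -- step 1 : X (m+1) ω = -1
      have hm1 : X (m + 1) ω = -1 := by
        by_contra hne
        apply hA 2 (by simp only [Finset.mem_Icc]; omega)
        rw [show 2 + m - 1 = m + 1 from by omega]
        constructor
        · apply card_filter_le_one' (a := m + 1)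
          intro i hi hpi
          simp only [Finset.mem_Icc] at hi
          by_contra hia
          rcases eq_or_ne i j with rfl | hij
          · rw [hxj] at hpi; exact absurd hpi (by norm_num)
          · have h0' := hz i (by simp only [Finset.mem_Icc]; omega) (by omega) hij
            rw [h0'] at hpi; exact absurd hpi (by norm_num)
        · apply card_filter_le_one' (a := j)
          intro i hi hpi
          simp only [Finset.mem_Icc] at hi
          by_contra hia
          rcases eq_or_ne i (m + 1) with rfl | him
          · exact hne hpi
          · have h0' := hz i (by simp only [Finset.mem_Icc]; omega) (by omega) hia
            rw [h0'] at hpi; exact absurd hpi (by norm_num)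
      -- step 2 : ω ∈ T
      have hT : ∀ i ∈ Finset.Icc 1 (m + 1), X i ω = v0 i := by
        intro i hi
        simp only [Finset.mem_Icc] at hi
        rcases eq_or_ne i 1 with rfl | hi1
        · rw [hv0_1]; exact hx1
        rcases eq_or_ne i j with rfl | hij
        · rw [hv0_j]; exact hxj
        rcases eq_or_ne i (m + 1) with rfl | him
        · rw [hv0_m1]; exact hm1
        · rw [hv0_z i hi1 hij him]
          exact hz i (by simp only [Finset.mem_Icc]; omega) hi1 hij
      -- step 3 : the tail property B
      have hB : (∃ i ∈ G, X i ω = -1) ∨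
          ∃ a ∈ G, ∃ b ∈ G, a ≠ b ∧ X a ω = 1 ∧ X b ω = 1 := by
        by_contra hnB
        push_neg at hnB
        obtain ⟨hno, hone⟩ := hnB
        apply hA (j + 1) (by simp only [Finset.mem_Icc]; omega)
        rw [show j + 1 + m - 1 = m + j from by omega]
        constructor
        · refine Finset.card_le_one.mpr fun a ha b hb => ?_
          simp only [Finset.mem_filter, Finset.mem_Icc] at ha hb
          obtain ⟨⟨ha1, ha2⟩, hpa⟩ := ha
          obtain ⟨⟨hb1, hb2⟩, hpb⟩ := hb
          have haG : a ∈ G := by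
            simp only [hGdef, Finset.mem_Icc]
            by_contra h'
            rcases eq_or_ne a (m + 1) with rfl | ham
            · rw [hm1] at hpa; exact absurd hpa (by norm_num)
            · have h0' := hz a (by simp only [Finset.mem_Icc]; omega) (by omega) (by omega)
              rw [h0'] at hpa; exact absurd hpa (by norm_num)
          have hbG : b ∈ G := by
            simp only [hGdef, Finset.mem_Icc]
            by_contra h'
            rcases eq_or_ne b (m + 1) with rfl | hbm
            · rw [hm1] at hpb; exact absurd hpb (by norm_num)
            · have h0' := hz b (by simp only [Finset.mem_Icc]; omega) (by omega) (by omega)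
              rw [h0'] at hpb; exact absurd hpb (by norm_num)
          by_contra hab
          exact hone a haG b hbG hab hpa hpb
        · apply card_filter_le_one' (a := m + 1)
          intro i hi hpi
          simp only [Finset.mem_Icc] at hi
          by_contra him
          rcases le_or_gt i m with hile | hile
          · have h0' := hz i (by simp only [Finset.mem_Icc]; omega) (by omega) (by omega)
            rw [h0'] at hpi; exact absurd hpi (by norm_num)
          · exact hno i (by simp only [hGdef, Finset.mem_Icc]; omega) hpi
      refine ⟨hT, ?_⟩
      rintro (hE0' | ⟨k, hkG, hEk'⟩)
      · rcases hB with ⟨i, hiG, hi⟩ | ⟨a, haG, b, hbG, hab, hpa, hpb⟩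
        · simp only [hGdef, Finset.mem_Icc] at hiG
          have := hE0' i (by simp only [Finset.mem_Icc]; omega)
          rw [hv0_z i (by omega) (by omega) (by omega)] at this
          rw [this] at hi; exact absurd hi (by norm_num)
        · simp only [hGdef, Finset.mem_Icc] at haG
          have := hE0' a (by simp only [Finset.mem_Icc]; omega)
          rw [hv0_z a (by omega) (by omega) (by omega)] at this
          rw [this] at hpa; exact absurd hpa (by norm_num)
      · rcases hB with ⟨i, hiG, hi⟩ | ⟨a, haG, b, hbG, hab, hpa, hpb⟩
        · simp only [hGdef, Finset.mem_Icc] at hiG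
          have := hEk' i (by simp only [Finset.mem_Icc]; omega)
          rcases eq_or_ne i k with rfl | hik
          · simp only [hvkdef, if_pos rfl] at this
            rw [this] at hi; exact absurd hi (by norm_num)
          · simp only [hvkdef, if_neg hik] at this
            rw [hv0_z i (by omega) (by omega) (by omega)] at this
            rw [this] at hi; exact absurd hi (by norm_num)
        · simp only [hGdef, Finset.mem_Icc] at haG hbG
          have hA' := hEk' a (by simp only [Finset.mem_Icc]; omega)
          have hB' := hEk' b (by simp only [Finset.mem_Icc]; omega)
          have hak : a = k := by
            by_contra hak
            simp only [hvkdef, if_neg hak] at hA'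
            rw [hv0_z a (by omega) (by omega) (by omega)] at hA'
            rw [hA'] at hpa; exact absurd hpa (by norm_num)
          have hbk : b = k := by
            by_contra hbk
            simp only [hvkdef, if_neg hbk] at hB'
            rw [hv0_z b (by omega) (by omega) (by omega)] at hB'
            rw [hB'] at hpb; exact absurd hpb (by norm_num)
          exact hab (hak.trans hbk.symm)
    · rintro ⟨hT, hEr⟩
      have hx1 : X 1 ω = 1 := by
        have := hT 1 (by simp only [Finset.mem_Icc]; omega); rwa [hv0_1] at this
      have hxj : X j ω = -1 := by
        have := hT j (by simp only [Finset.mem_Icc]; omega); rwa [hv0_j] at this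
      have hm1 : X (m + 1) ω = -1 := by
        have := hT (m + 1) (by simp only [Finset.mem_Icc]; omega); rwa [hv0_m1] at this
      have hz : ∀ l ∈ Finset.Icc 1 m, l ≠ 1 → l ≠ j → X l ω = 0 := by
        intro l hl hl1 hlj
        simp only [Finset.mem_Icc] at hl
        have := hT l (by simp only [Finset.mem_Icc]; omega)
        rwa [hv0_z l hl1 hlj (by omega)] at this
      -- recover B from ¬ Er
      have hB : (∃ i ∈ G, X i ω = -1) ∨
          ∃ a ∈ G, ∃ b ∈ G, a ≠ b ∧ X a ω = 1 ∧ X b ω = 1 := by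
        by_contra hnB
        push_neg at hnB
        obtain ⟨hno, hone⟩ := hnB
        apply hEr
        by_cases hex : ∃ k ∈ G, X k ω = 1
        · obtain ⟨k, hkG, hk1⟩ := hex
          refine Or.inr ⟨k, hkG, fun i hi => ?_⟩
          simp only [Finset.mem_Icc] at hi
          rcases eq_or_ne i k with rfl | hik
          · simp only [hvkdef, if_pos rfl]; exact hk1
          simp only [hvkdef, if_neg hik]
          rcases le_or_gt i (m + 1) with him | him
          · exact hT i (by simp only [Finset.mem_Icc]; omega)
          · have hiG : i ∈ G := by simp only [hGdef, Finset.mem_Icc]; omega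
            rw [hv0_z i (by omega) (by omega) (by omega)]
            rcases hval i ω with h | h | h
            · exact h
            · exact absurd (hone k hkG i hiG (Ne.symm hik) hk1 h) (by simp)
            · exact absurd (hno i hiG h) (by simp)
        · refine Or.inl fun i hi => ?_
          simp only [Finset.mem_Icc] at hi
          rcases le_or_gt i (m + 1) with him | him
          · exact hT i (by simp only [Finset.mem_Icc]; omega)
          · have hiG : i ∈ G := by simp only [hGdef, Finset.mem_Icc]; omega
            rw [hv0_z i (by omega) (by omega) (by omega)]
            rcases hval i ω with h | h | h
            · exact h
            · exact absurd ⟨i, hiG, h⟩ hex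
            · exact absurd (hno i hiG h) (by simp)
      refine ⟨⟨hx1, hxj, hz⟩, ?_⟩
      intro n hn hc
      obtain ⟨hc1, hc2⟩ := hc
      simp only [Finset.mem_Icc] at hn
      rcases le_or_gt n j with hnj | hnj
      · have h2c : 2 ≤ ((Finset.Icc n (n + m - 1)).filter (fun i => X i ω = -1)).card := by
          apply two_le_card_filter' (a := j) (b := m + 1) (by omega)
            (by simp only [Finset.mem_Icc]; omega) (by simp only [Finset.mem_Icc]; omega) hxj hm1
        omega
      · rcases hB with ⟨i, hiG, hi⟩ | ⟨a, haG, b, hbG, hab, hpa, hpb⟩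
        · simp only [hGdef, Finset.mem_Icc] at hiG
          have h2c : 2 ≤ ((Finset.Icc n (n + m - 1)).filter (fun i => X i ω = -1)).card := by
            apply two_le_card_filter' (a := m + 1) (b := i) (by omega)
              (by simp only [Finset.mem_Icc]; omega) (by simp only [Finset.mem_Icc]; omega) hm1 hi
          omega
        · simp only [hGdef, Finset.mem_Icc] at haG hbG
          have h2c : 2 ≤ ((Finset.Icc n (n + m - 1)).filter (fun i => X i ω = 1)).card := by
            apply two_le_card_filter' (a := a) (b := b) hab
              (by simp only [Finset.mem_Icc]; omega) (by simp only [Finset.mem_Icc]; omega) hpa hpb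
          omega
  -- measurability facts
  have hms : ∀ (i : ℕ) (c : ℤ), MeasurableSet {ω | X i ω = c} := fun i c =>
    (hmeas i) (measurableSet_singleton c)
  have hprod : ∀ (c : ℕ → ℤ) (s : Finset ℕ),
      P (⋂ i ∈ s, {ω | X i ω = c i}) = ∏ i ∈ s, P {ω | X i ω = c i} := by
    intro c s
    apply hindep.meas_biInter
    intro i _
    exact ⟨{c i}, measurableSet_singleton _, rfl⟩
  have hmT : MeasurableSet T := by
    exact MeasurableSet.biInter (Set.to_countable _) fun i _ => hms i _
  have hmE0 : MeasurableSet E0 := by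
    exact MeasurableSet.biInter (Set.to_countable _) fun i _ => hms i _
  have hmEk : ∀ k, MeasurableSet (Ek k) := fun k =>
    MeasurableSet.biInter (Set.to_countable _) fun i _ => hms i _
  have hmEr : MeasurableSet Er :=
    hmE0.union (MeasurableSet.biUnion (Set.to_countable _) fun k _ => hmEk k)
  -- Er ⊆ T
  have hErT : Er ⊆ T := by
    intro ω hω
    rcases hω with hω | hω
    · simp only [hE0def, Set.mem_iInter] at hω
      simp only [hTdef, Set.mem_iInter]
      intro i hi
      simp only [Finset.mem_Icc] at hi
      exact hω i (by simp only [Finset.mem_Icc]; omega)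
    · simp only [Set.mem_iUnion, exists_prop] at hω
      obtain ⟨k, hkG, hω⟩ := hω
      simp only [hGdef, Finset.mem_Icc] at hkG
      simp only [hEkdef, Set.mem_iInter] at hω
      simp only [hTdef, Set.mem_iInter]
      intro i hi
      simp only [Finset.mem_Icc] at hi
      have := hω i (by simp only [Finset.mem_Icc]; omega)
      simp only [Set.mem_setOf_eq, hvkdef, if_neg (show i ≠ k by omega)] at this
      exact this
  -- measure of T \ Er
  have hPdiff : P (T \ Er) = P T - P Er :=
    measure_diff hErT hmEr.nullMeasurableSet (measure_ne_top P Er)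
  rw [key, hPdiff, ENNReal.toReal_sub_of_le (measure_mono hErT) (measure_ne_top P T)]
  -- disjointness of the pieces of Er
  have hdE0k : ∀ k ∈ G, Disjoint E0 (Ek k) := by
    intro k hkG
    simp only [hGdef, Finset.mem_Icc] at hkG
    rw [Set.disjoint_left]
    intro ω h0' hk'
    simp only [hE0def, Set.mem_iInter] at h0'
    simp only [hEkdef, Set.mem_iInter] at hk'
    have e0 := h0' k (by simp only [Finset.mem_Icc]; omega)
    have e1 := hk' k (by simp only [Finset.mem_Icc]; omega)
    simp only [Set.mem_setOf_eq] at e0 e1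
    rw [hv0_z k (by omega) (by omega) (by omega)] at e0
    simp only [hvkdef, if_pos rfl] at e1
    rw [e0] at e1; exact absurd e1 (by norm_num)
  have hdkk : ∀ k ∈ G, ∀ k' ∈ G, k ≠ k' → Disjoint (Ek k) (Ek k') := by
    intro k hkG k' hk'G hkk
    simp only [hGdef, Finset.mem_Icc] at hkG hk'G
    rw [Set.disjoint_left]
    intro ω h0' hk'
    simp only [hEkdef, Set.mem_iInter] at h0' hk'
    have e0 := h0' k (by simp only [Finset.mem_Icc]; omega)
    have e1 := hk' k (by simp only [Finset.mem_Icc]; omega)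
    simp only [Set.mem_setOf_eq] at e0 e1
    simp only [hvkdef, if_pos rfl] at e0
    simp only [hvkdef, if_neg hkk] at e1
    rw [hv0_z k (by omega) (by omega) (by omega)] at e1
    rw [e0] at e1; exact absurd e1 (by norm_num)
  -- measure of Er
  have hPEr : P Er = P E0 + ∑ k ∈ G, P (Ek k) := by
    have hd2 : Disjoint E0 (⋃ k ∈ G, Ek k) := by
      rw [Set.disjoint_iUnion_right]
      intro k
      rw [Set.disjoint_iUnion_right]
      intro hkG
      exact hdE0k k hkG
    rw [hErdef,
      measure_union hd2 (MeasurableSet.biUnion (Set.to_countable _) fun k _ => hmEk k)]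
    congr 1
    exact measure_biUnion_finset (fun k hk k' hk' hkk => hdkk k hk k' hk' hkk)
      (fun k _ => hmEk k)
  -- single coordinate probabilities, real valued
  have htoReal : ∀ (i : ℕ) (c : ℤ), c = 0 ∨ c = 1 ∨ c = -1 →
      (P {ω | X i ω = c}).toReal = if c = 1 then q1 else if c = -1 then q2 else p := by
    intro i c hc
    rcases hc with rfl | rfl | rfl
    · simp [h0 i, ENNReal.toReal_ofReal hp.le]
    · simp [h1 i, ENNReal.toReal_ofReal hq1.le]
    · simp [h2 i, ENNReal.toReal_ofReal hq2.le]
  -- value of P T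
  have hv0cases : ∀ i, v0 i = 0 ∨ v0 i = 1 ∨ v0 i = -1 := by
    intro i
    simp only [hv0def]
    split_ifs <;> simp
  have hvkcases : ∀ k i, vk k i = 0 ∨ vk k i = 1 ∨ vk k i = -1 := by
    intro k i
    simp only [hvkdef]
    split_ifs
    · simp
    · exact hv0cases i
  have hw0 : ∀ i, (P {ω | X i ω = v0 i}).toReal
      = if i = 1 then q1 else if i = j then q2 else if i = m + 1 then q2 else p := by
    intro i
    rw [htoReal i _ (hv0cases i)]
    rcases eq_or_ne i 1 with rfl | hi1
    · simp [hv0_1]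
    rcases eq_or_ne i j with rfl | hij
    · rw [hv0_j]; simp [hi1]
    rcases eq_or_ne i (m + 1) with rfl | him
    · rw [hv0_m1]; simp [hi1, hij]; omega
    · rw [hv0_z i hi1 hij him]; simp [hi1, hij, him]
  -- the generic product over Icc 1 (m+1)
  have hcard1 : (Finset.Icc 1 (m + 1)).card = m + 1 := by rw [Nat.card_Icc]; omega
  have h1mem : (1 : ℕ) ∈ Finset.Icc 1 (m + 1) := by simp only [Finset.mem_Icc]; omega
  have hjmem : j ∈ (Finset.Icc 1 (m + 1)).erase 1 := by
    simp only [Finset.mem_erase, Finset.mem_Icc]; omega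
  have hm1mem : m + 1 ∈ ((Finset.Icc 1 (m + 1)).erase 1).erase j := by
    simp only [Finset.mem_erase, Finset.mem_Icc]; omega
  have hprodT : ∏ i ∈ Finset.Icc 1 (m + 1), (P {ω | X i ω = v0 i}).toReal
      = q1 * q2 ^ 2 * p ^ (m - 2) := by
    rw [← Finset.mul_prod_erase _ _ h1mem, ← Finset.mul_prod_erase _ _ hjmem,
      ← Finset.mul_prod_erase _ _ hm1mem]
    have hrest : ∏ i ∈ (((Finset.Icc 1 (m + 1)).erase 1).erase j).erase (m + 1),
        (P {ω | X i ω = v0 i}).toReal = p ^ (m - 2) := by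
      rw [Finset.prod_congr rfl (fun i hi => ?_), Finset.prod_const]
      · congr 1
        rw [Finset.card_erase_of_mem hm1mem, Finset.card_erase_of_mem hjmem,
          Finset.card_erase_of_mem h1mem, hcard1]
        omega
      · simp only [Finset.mem_erase, Finset.mem_Icc] at hi
        rw [hw0 i]
        simp [hi.2.2.1, hi.2.1, hi.1]
    rw [hrest, hw0 1, hw0 j, hw0 (m + 1)]
    have hj1' : j ≠ 1 := by omega
    have hm1' : m + 1 ≠ 1 := by omega
    have hm1j : m + 1 ≠ j := by omega
    simp only [hj1', hm1', hm1j, if_true, if_false, if_pos rfl, if_neg, reduceIte]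
    ring
  have hPT : (P T).toReal = q1 * q2 ^ 2 * p ^ (m - 2) := by
    rw [hTdef, hprod, ENNReal.toReal_prod, ← hprodT]
  -- split Icc 1 (m+j) into Icc 1 (m+1) ∪ G
  have hsplit : Finset.Icc 1 (m + j) = Finset.Icc 1 (m + 1) ∪ G := by
    ext a
    simp only [Finset.mem_Icc, Finset.mem_union, hGdef]
    omega
  have hdisjFG : Disjoint (Finset.Icc 1 (m + 1)) G := by
    rw [Finset.disjoint_left]
    intro a ha hb
    simp only [Finset.mem_Icc, hGdef] at ha hb
    omega
  have hcardG : G.card = j - 1 := by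
    rw [hGdef, Nat.card_Icc]; omega
  -- measure of E0
  have hPE0 : (P E0).toReal = q1 * q2 ^ 2 * p ^ (m - 2) * p ^ (j - 1) := by
    rw [hE0def, hprod, ENNReal.toReal_prod, hsplit, Finset.prod_union hdisjFG, hprodT]
    congr 1
    rw [Finset.prod_congr rfl (fun i hi => ?_), Finset.prod_const, hcardG]
    simp only [hGdef, Finset.mem_Icc] at hi
    rw [hw0 i]
    simp only [if_neg (show i ≠ 1 by omega), if_neg (show i ≠ j by omega),
      if_neg (show i ≠ m + 1 by omega)]
  -- measure of Ek k for k ∈ G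
  have hPEk : ∀ k ∈ G, (P (Ek k)).toReal
      = q1 * q2 ^ 2 * p ^ (m - 2) * (q1 * p ^ (j - 2)) := by
    intro k hkG
    have hkG' := hkG
    simp only [hGdef, Finset.mem_Icc] at hkG'
    rw [hEkdef]
    simp only
    rw [hprod, ENNReal.toReal_prod, hsplit, Finset.prod_union hdisjFG]
    have hF : ∏ i ∈ Finset.Icc 1 (m + 1), (P {ω | X i ω = vk k i}).toReal
        = q1 * q2 ^ 2 * p ^ (m - 2) := by
      rw [Finset.prod_congr rfl (fun i hi => ?_), hprodT]
      simp only [Finset.mem_Icc] at hi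
      simp only [hvkdef, if_neg (show i ≠ k by omega)]
    have hGpart : ∏ i ∈ G, (P {ω | X i ω = vk k i}).toReal = q1 * p ^ (j - 2) := by
      rw [← Finset.mul_prod_erase _ _ hkG]
      have hkval : (P {ω | X k ω = vk k k}).toReal = q1 := by
        rw [htoReal k _ (hvkcases k k)]
        simp [hvkdef]
      rw [hkval]
      congr 1
      rw [Finset.prod_congr rfl (fun i hi => ?_), Finset.prod_const,
        Finset.card_erase_of_mem hkG, hcardG]
      · congr 1 <;> omega
      · simp only [Finset.mem_erase, hGdef, Finset.mem_Icc] at hi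
        simp only [hvkdef, if_neg hi.1]
        rw [hw0 i]
        simp only [if_neg (show i ≠ 1 by omega), if_neg (show i ≠ j by omega),
          if_neg (show i ≠ m + 1 by omega)]
    rw [hF, hGpart]
  -- assemble
  have hPErR : (P Er).toReal = q1 * q2 ^ 2 * p ^ (m - 2) * p ^ (j - 1)
      + ((j : ℝ) - 1) * (q1 * q2 ^ 2 * p ^ (m - 2) * (q1 * p ^ (j - 2))) := by
    rw [hPEr, ENNReal.toReal_add (measure_ne_top P E0) ?_]
    · rw [hPE0, ENNReal.toReal_sum (fun k _ => measure_ne_top P (Ek k))]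
      congr 1
      rw [Finset.sum_congr rfl (fun k hk => hPEk k hk), Finset.sum_const, hcardG,
        nsmul_eq_mul]
      congr 1
      have : (1 : ℕ) ≤ j := by omega
      push_cast [Nat.cast_sub this]
      ring
    · exact (ENNReal.sum_lt_top.mpr fun k _ => measure_lt_top P (Ek k)).ne
  rw [hPT, hPErR]
  ring
end

section
/- For 1 < i < m, Y_{i,m} := P(A_1^{(2)}(i,m) ∩ Ā_2 ∩ ⋯ ∩ Ā_m) = q_1 q_2 p^{m−2} ( q_1 (1 − p^{i−1}) + q_2 ). -/
open MeasureTheory ProbabilityTheory Finset Filter Asymptotics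

def cylEvent {Ω : Type*} (X : ℕ → Ω → ℤ) (g : ℕ → ℤ) (N : ℕ) : Set Ω :=
  {ω | ∀ j ∈ Finset.Icc 1 N, X j ω = g j}

lemma cylEvent_eq {Ω : Type*} (X : ℕ → Ω → ℤ) (g : ℕ → ℤ) (N : ℕ) :
    cylEvent X g N = ⋂ j ∈ Finset.Icc 1 N, X j ⁻¹' {g j} := by
  ext ω; simp [cylEvent]

lemma cylEvent_meas {Ω : Type*} [MeasurableSpace Ω] (X : ℕ → Ω → ℤ)
    (hmeas : ∀ i, Measurable (X i)) (g : ℕ → ℤ) (N : ℕ) :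
    MeasurableSet (cylEvent X g N) := by
  rw [cylEvent_eq]
  exact MeasurableSet.biInter (Finset.Icc 1 N).countable_toSet
    (fun j _ => (hmeas j) (measurableSet_singleton _))

lemma cylEvent_prob {Ω : Type*} [MeasurableSpace Ω] (P : Measure Ω) (X : ℕ → Ω → ℤ)
    (hindep : iIndepFun X P) (g : ℕ → ℤ) (N : ℕ) :
    P (cylEvent X g N) = ∏ j ∈ Finset.Icc 1 N, P (X j ⁻¹' {g j}) := by
  rw [cylEvent_eq]
  exact hindep.meas_biInter (fun j _ => ⟨{g j}, measurableSet_singleton _, rfl⟩)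

theorem Y_two_middle_last
    {Ω : Type*} [MeasurableSpace Ω] (P : Measure Ω) [IsProbabilityMeasure P]
    (X : ℕ → Ω → ℤ) (hmeas : ∀ i, Measurable (X i))
    (hindep : iIndepFun X P)
    (p q1 q2 : ℝ) (hp : 0 < p) (hq1 : 0 < q1) (hq2 : 0 < q2) (hsum : p + q1 + q2 = 1)
    (h0 : ∀ i, P {ω | X i ω = 0} = ENNReal.ofReal p)
    (h1 : ∀ i, P {ω | X i ω = 1} = ENNReal.ofReal q1)
    (h2 : ∀ i, P {ω | X i ω = -1} = ENNReal.ofReal q2)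
    (hval : ∀ i ω, X i ω = 0 ∨ X i ω = 1 ∨ X i ω = -1)
    (m i : ℕ) (hm : 2 ≤ m) (hi1 : 1 < i) (him : i < m) :
    (P (twoEvent X m i m ∩ ⋂ n ∈ Finset.Icc 2 m, (contaminatedEvent X m n)ᶜ)).toReal =
      q1 * q2 * p ^ (m - 2) * (q1 * (1 - p ^ (i - 1)) + q2) := by
  classical
  have hple1 : p ≤ 1 := by nlinarith
  set f : ℤ → ℕ → ℤ := fun v j =>
    if j = i then 1 else if j = m then -1 else if j = m + 1 then v else 0 with hf
  have hfi : ∀ v, f v i = 1 := fun v => by simp [hf]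
  have hfm : ∀ v, f v m = -1 := fun v => by simp [hf, him.ne']
  have hfm1 : ∀ v, f v (m + 1) = v := fun v => by
    simp [hf, show m + 1 ≠ i by omega, show m + 1 ≠ m by omega]
  have hf0 : ∀ v j, j ≠ i → j ≠ m → j ≠ m + 1 → f v j = 0 := fun v j hji hjm hjm1 => by
    simp [hf, hji, hjm, hjm1]
  -- key product formula
  have key : ∀ (v : ℤ) (N : ℕ), v = 1 ∨ v = -1 → m + 1 ≤ N →
      P (cylEvent X (f v) N)
        = ENNReal.ofReal (q1 * q2 * p ^ (m - 2) * (if v = 1 then q1 else q2)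
            * p ^ (N - (m + 1))) := by
    intro v N hv hN
    rw [cylEvent_prob P X hindep]
    set w : ℕ → ℝ := fun j =>
      if j = i then q1 else if j = m then q2
      else if j = m + 1 then (if v = 1 then q1 else q2) else p with hw
    have hfac : ∀ j, P (X j ⁻¹' {f v j}) = ENNReal.ofReal (w j) := by
      intro j
      have hpre : ∀ c : ℤ, X j ⁻¹' {c} = {ω | X j ω = c} := fun c => rfl
      simp only [hw, hf]
      split_ifs with hji hjm hjm1 hv1
      · rw [hpre]; exact h1 j
      · rw [hpre]; exact h2 j
      · subst hv1; rw [hpre]; exact h1 j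
      · have hvm : v = -1 := hv.resolve_left hv1
        subst hvm; rw [hpre]; exact h2 j
      · rw [hpre]; exact h0 j
    rw [Finset.prod_congr rfl (fun j _ => hfac j),
      ← ENNReal.ofReal_prod_of_nonneg]
    · have hiI : i ∈ Finset.Icc 1 N := by rw [Finset.mem_Icc]; omega
      have hmI : m ∈ (Finset.Icc 1 N).erase i := by
        rw [Finset.mem_erase, Finset.mem_Icc]; omega
      have hm1I : m + 1 ∈ ((Finset.Icc 1 N).erase i).erase m := by
        rw [Finset.mem_erase, Finset.mem_erase, Finset.mem_Icc]; omega
      rw [← Finset.mul_prod_erase _ w hiI, ← Finset.mul_prod_erase _ w hmI,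
        ← Finset.mul_prod_erase _ w hm1I]
      have hrest : ∀ j ∈ ((((Finset.Icc 1 N).erase i).erase m).erase (m + 1)), w j = p := by
        intro j hj
        simp only [Finset.mem_erase] at hj
        simp [hw, hj.1, hj.2.1, hj.2.2.1]
      rw [Finset.prod_congr rfl hrest, Finset.prod_const]
      have hcard : ((((Finset.Icc 1 N).erase i).erase m).erase (m + 1)).card = N - 3 := by
        rw [Finset.card_erase_of_mem hm1I, Finset.card_erase_of_mem hmI,
          Finset.card_erase_of_mem hiI, Nat.card_Icc]
        omega
      have hwi : w i = q1 := by simp [hw]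
      have hwm : w m = q2 := by simp [hw, him.ne']
      have hwm1 : w (m + 1) = if v = 1 then q1 else q2 := by
        simp [hw, show m + 1 ≠ i by omega, show m + 1 ≠ m by omega]
      rw [hcard, hwi, hwm, hwm1]
      congr 1
      rw [show N - 3 = (m - 2) + (N - (m + 1)) by omega, pow_add]
      ring
    · intro j _
      simp only [hw]
      split_ifs <;> positivity
  -- the structural set identity
  have hsplit : twoEvent X m i m ∩ ⋂ n ∈ Finset.Icc 2 m, (contaminatedEvent X m n)ᶜ
      = cylEvent X (f (-1)) (m + 1)
        ∪ (cylEvent X (f 1) (m + 1) \ cylEvent X (f 1) (m + i)) := by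
    ext ω
    have hnot : ∀ n, ω ∈ (contaminatedEvent X m n)ᶜ ↔
        (1 < ((Finset.Icc n (n + m - 1)).filter (fun j => X j ω = 1)).card ∨
         1 < ((Finset.Icc n (n + m - 1)).filter (fun j => X j ω = -1)).card) := by
      intro n
      simp only [contaminatedEvent, Set.mem_compl_iff, Set.mem_setOf_eq, not_and_or, not_le]
    simp only [twoEvent, cylEvent, Set.mem_inter_iff, Set.mem_setOf_eq, Set.mem_iInter,
      Set.mem_union, Set.mem_diff]
    constructor
    · rintro ⟨⟨hXi, hXm, hXo⟩, hcap⟩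
      have hC : ∀ j ∈ Finset.Icc 1 m, ∀ v : ℤ, X j ω = f v j := by
        intro j hj v
        have hj' := Finset.mem_Icc.mp hj
        rcases eq_or_ne j i with rfl | hne1
        · rw [hfi]; exact hXi
        rcases eq_or_ne j m with rfl | hne2
        · rw [hfm]; exact hXm
        rw [hf0 v j hne1 hne2 (by omega)]
        exact hXo j hj hne1 hne2
      have hXm1 : X (m + 1) ω = 1 ∨ X (m + 1) ω = -1 := by
        rcases hval (m + 1) ω with h | h | h
        · exfalso
          have hA2 := (hnot 2).mp (hcap 2 (Finset.mem_Icc.mpr ⟨le_refl 2, hm⟩))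
          have hgen : ∀ (c : ℤ) (a : ℕ), (∀ j, 2 ≤ j → j ≤ 2 + m - 1 → X j ω = c → j = a) →
              ((Finset.Icc 2 (2 + m - 1)).filter (fun j => X j ω = c)).card ≤ 1 := by
            intro c a hsub
            have : (Finset.Icc 2 (2 + m - 1)).filter (fun j => X j ω = c) ⊆ {a} := by
              intro j hj
              obtain ⟨hjI, hjX⟩ := Finset.mem_filter.mp hj
              obtain ⟨hj2, hjm⟩ := Finset.mem_Icc.mp hjI
              exact Finset.mem_singleton.mpr (hsub j hj2 hjm hjX)
            simpa using Finset.card_le_card this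
          rcases hA2 with hlt | hlt
          · refine absurd hlt (not_lt.mpr (hgen 1 i ?_))
            intro j hj2 hjm hjX
            rcases eq_or_ne j (m + 1) with rfl | hne
            · rw [h] at hjX; norm_num at hjX
            have hjle : j ≤ m := by omega
            rw [hC j (Finset.mem_Icc.mpr ⟨by omega, hjle⟩) 1] at hjX
            rcases eq_or_ne j i with rfl | n1
            · rfl
            rcases eq_or_ne j m with rfl | n2
            · rw [hfm] at hjX; norm_num at hjX
            rcases eq_or_ne j (m + 1) with rfl | n3
            · exact absurd rfl hne
            rw [hf0 1 j n1 n2 n3] at hjX; norm_num at hjX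
          · refine absurd hlt (not_lt.mpr (hgen (-1) m ?_))
            intro j hj2 hjm hjX
            rcases eq_or_ne j (m + 1) with rfl | hne
            · rw [h] at hjX; norm_num at hjX
            have hjle : j ≤ m := by omega
            rw [hC j (Finset.mem_Icc.mpr ⟨by omega, hjle⟩) 1] at hjX
            rcases eq_or_ne j i with rfl | n1
            · rw [hfi] at hjX; norm_num at hjX
            rcases eq_or_ne j m with rfl | n2
            · rfl
            rcases eq_or_ne j (m + 1) with rfl | n3
            · exact absurd rfl hne
            rw [hf0 1 j n1 n2 n3] at hjX; norm_num at hjX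
        · exact Or.inl h
        · exact Or.inr h
      rcases hXm1 with hP | hM
      · -- X (m+1) = 1 : right component
        right
        have hE2 : ∀ j ∈ Finset.Icc 1 (m + 1), X j ω = f 1 j := by
          intro j hj
          have hj' := Finset.mem_Icc.mp hj
          rcases eq_or_ne j (m + 1) with rfl | hne
          · rw [hfm1]; exact hP
          · exact hC j (Finset.mem_Icc.mpr ⟨hj'.1, by omega⟩) 1
        refine ⟨hE2, ?_⟩
        intro hE3
        have hAi := (hnot (i + 1)).mp
          (hcap (i + 1) (Finset.mem_Icc.mpr ⟨by omega, by omega⟩))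
        have hgen : ∀ (c : ℤ) (a : ℕ),
            (∀ j, i + 1 ≤ j → j ≤ i + 1 + m - 1 → X j ω = c → j = a) →
            ((Finset.Icc (i + 1) (i + 1 + m - 1)).filter (fun j => X j ω = c)).card ≤ 1 := by
          intro c a hsub
          have : (Finset.Icc (i + 1) (i + 1 + m - 1)).filter (fun j => X j ω = c) ⊆ {a} := by
            intro j hj
            obtain ⟨hjI, hjX⟩ := Finset.mem_filter.mp hj
            obtain ⟨hj2, hjm⟩ := Finset.mem_Icc.mp hjI
            exact Finset.mem_singleton.mpr (hsub j hj2 hjm hjX)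
          simpa using Finset.card_le_card this
        rcases hAi with hlt | hlt
        · refine absurd hlt (not_lt.mpr (hgen 1 (m + 1) ?_))
          intro j hj2 hjm hjX
          rw [hE3 j (Finset.mem_Icc.mpr ⟨by omega, by omega⟩)] at hjX
          rcases eq_or_ne j i with rfl | n1
          · omega
          rcases eq_or_ne j m with rfl | n2
          · rw [hfm] at hjX; norm_num at hjX
          rcases eq_or_ne j (m + 1) with rfl | n3
          · rfl
          rw [hf0 1 j n1 n2 n3] at hjX; norm_num at hjX
        · refine absurd hlt (not_lt.mpr (hgen (-1) m ?_))
          intro j hj2 hjm hjX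
          rw [hE3 j (Finset.mem_Icc.mpr ⟨by omega, by omega⟩)] at hjX
          rcases eq_or_ne j i with rfl | n1
          · rw [hfi] at hjX; norm_num at hjX
          rcases eq_or_ne j m with rfl | n2
          · rfl
          rcases eq_or_ne j (m + 1) with rfl | n3
          · rw [hfm1] at hjX; norm_num at hjX
          rw [hf0 1 j n1 n2 n3] at hjX; norm_num at hjX
      · -- X (m+1) = -1 : left component
        left
        intro j hj
        have hj' := Finset.mem_Icc.mp hj
        rcases eq_or_ne j (m + 1) with rfl | hne
        · rw [hfm1]; exact hM
        · exact hC j (Finset.mem_Icc.mpr ⟨hj'.1, by omega⟩) (-1)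
    · rintro (hE | ⟨hE2, hE3⟩)
      · -- left component
        have hXi : X i ω = 1 := by
          rw [hE i (Finset.mem_Icc.mpr ⟨by omega, by omega⟩)]; exact hfi _
        have hXm : X m ω = -1 := by
          rw [hE m (Finset.mem_Icc.mpr ⟨by omega, by omega⟩)]; exact hfm _
        have hXm1 : X (m + 1) ω = -1 := by
          rw [hE (m + 1) (Finset.mem_Icc.mpr ⟨by omega, by omega⟩)]; exact hfm1 _
        refine ⟨⟨hXi, hXm, ?_⟩, ?_⟩
        · intro l hl hl1 hl2
          have hl' := Finset.mem_Icc.mp hl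
          rw [hE l (Finset.mem_Icc.mpr ⟨hl'.1, by omega⟩)]
          exact hf0 _ l hl1 hl2 (by omega)
        · intro n hn
          have hn' := Finset.mem_Icc.mp hn
          rw [hnot n]
          right
          refine Finset.one_lt_card.mpr ⟨m, ?_, m + 1, ?_, by omega⟩
          · exact Finset.mem_filter.mpr ⟨Finset.mem_Icc.mpr ⟨by omega, by omega⟩, hXm⟩
          · exact Finset.mem_filter.mpr ⟨Finset.mem_Icc.mpr ⟨by omega, by omega⟩, hXm1⟩
      · -- right component
        have hXi : X i ω = 1 := by
          rw [hE2 i (Finset.mem_Icc.mpr ⟨by omega, by omega⟩)]; exact hfi _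
        have hXm : X m ω = -1 := by
          rw [hE2 m (Finset.mem_Icc.mpr ⟨by omega, by omega⟩)]; exact hfm _
        have hXm1 : X (m + 1) ω = 1 := by
          rw [hE2 (m + 1) (Finset.mem_Icc.mpr ⟨by omega, by omega⟩)]; exact hfm1 _
        push_neg at hE3
        obtain ⟨t, htI, htne⟩ := hE3
        have ht' := Finset.mem_Icc.mp htI
        have htm2 : m + 2 ≤ t := by
          by_contra hcon
          exact htne (hE2 t (Finset.mem_Icc.mpr ⟨ht'.1, by omega⟩))
        have htval : X t ω = 1 ∨ X t ω = -1 := by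
          rcases hval t ω with h | h | h
          · exfalso; apply htne; rw [h, hf0 1 t (by omega) (by omega) (by omega)]
          · exact Or.inl h
          · exact Or.inr h
        refine ⟨⟨hXi, hXm, ?_⟩, ?_⟩
        · intro l hl hl1 hl2
          have hl' := Finset.mem_Icc.mp hl
          rw [hE2 l (Finset.mem_Icc.mpr ⟨hl'.1, by omega⟩)]
          exact hf0 _ l hl1 hl2 (by omega)
        · intro n hn
          have hn' := Finset.mem_Icc.mp hn
          rw [hnot n]
          by_cases hni : n ≤ i
          · left
            refine Finset.one_lt_card.mpr ⟨i, ?_, m + 1, ?_, by omega⟩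
            · exact Finset.mem_filter.mpr ⟨Finset.mem_Icc.mpr ⟨by omega, by omega⟩, hXi⟩
            · exact Finset.mem_filter.mpr ⟨Finset.mem_Icc.mpr ⟨by omega, by omega⟩, hXm1⟩
          · rcases htval with ht1 | ht1
            · left
              refine Finset.one_lt_card.mpr ⟨t, ?_, m + 1, ?_, by omega⟩
              · exact Finset.mem_filter.mpr ⟨Finset.mem_Icc.mpr ⟨by omega, by omega⟩, ht1⟩
              · exact Finset.mem_filter.mpr ⟨Finset.mem_Icc.mpr ⟨by omega, by omega⟩, hXm1⟩
            · right
              refine Finset.one_lt_card.mpr ⟨t, ?_, m, ?_, by omega⟩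
              · exact Finset.mem_filter.mpr ⟨Finset.mem_Icc.mpr ⟨by omega, by omega⟩, ht1⟩
              · exact Finset.mem_filter.mpr ⟨Finset.mem_Icc.mpr ⟨by omega, by omega⟩, hXm⟩
    -- end ext
  -- measure computation
  have hmeasE : ∀ (v : ℤ) (N : ℕ), MeasurableSet (cylEvent X (f v) N) :=
    fun v N => cylEvent_meas X hmeas _ _
  have hsub3 : cylEvent X (f 1) (m + i) ⊆ cylEvent X (f 1) (m + 1) := by
    intro ω hω j hj
    have hj' := Finset.mem_Icc.mp hj
    exact hω j (Finset.mem_Icc.mpr ⟨hj'.1, by omega⟩)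
  have hdisj : Disjoint (cylEvent X (f (-1)) (m + 1))
      (cylEvent X (f 1) (m + 1) \ cylEvent X (f 1) (m + i)) := by
    rw [Set.disjoint_left]
    intro ω ha hb
    have h1' : X (m + 1) ω = -1 := by
      rw [ha (m + 1) (Finset.mem_Icc.mpr ⟨by omega, le_refl _⟩)]; exact hfm1 _
    have h2' : X (m + 1) ω = 1 := by
      rw [hb.1 (m + 1) (Finset.mem_Icc.mpr ⟨by omega, le_refl _⟩)]; exact hfm1 _
    rw [h1'] at h2'
    norm_num at h2'
  rw [hsplit, measure_union hdisj ((hmeasE 1 (m + 1)).diff (hmeasE 1 (m + i))),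
    measure_diff hsub3 (hmeasE 1 (m + i)).nullMeasurableSet (measure_ne_top P _),
    key (-1) (m + 1) (Or.inr rfl) le_rfl, key 1 (m + 1) (Or.inl rfl) le_rfl,
    key 1 (m + i) (Or.inl rfl) (by omega)]
  rw [if_pos rfl, if_neg (by norm_num : ¬((-1 : ℤ) = 1)), Nat.sub_self, pow_zero,
    show m + i - (m + 1) = i - 1 by omega]
  have hc : (0:ℝ) ≤ q1 * q2 * p ^ (m - 2) := by positivity
  have hpl : p ^ (i - 1) ≤ 1 := pow_le_one₀ hp.le hple1
  have hnn : (0:ℝ) ≤ q1 * q2 * p ^ (m - 2) * q1 * 1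
      - q1 * q2 * p ^ (m - 2) * q1 * p ^ (i - 1) := by
    nlinarith [mul_nonneg (mul_nonneg hc hq1.le) (sub_nonneg.mpr hpl)]
  rw [← ENNReal.ofReal_sub _ (by positivity), ← ENNReal.ofReal_add (by positivity) hnn,
    ENNReal.toReal_ofReal (by positivity)]
  ring
end

section
/- For 1 < i < j < m, Y_{i,j} := P(A_1^{(2)}(i,j) ∩ Ā_2 ∩ ⋯ ∩ Ā_m) = q_1 q_2 p^{m−2} [ q_1 (1 − p^{i−1} − (i−1) p^{i−2} q_2 p^{j−i}) + q_2 (1 − p^{j−1} − (j−1) q_1 p^{j−2}) ]. -/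
open MeasureTheory ProbabilityTheory Finset Filter Asymptotics

def cylE {Ω : Type*} (X : ℕ → Ω → ℤ) (s : Finset ℕ) (v : ℕ → ℤ) : Set Ω :=
  {ω | ∀ l ∈ s, X l ω = v l}

lemma mem_cylE {Ω : Type*} {X : ℕ → Ω → ℤ} {s : Finset ℕ} {v : ℕ → ℤ} {ω : Ω} :
    ω ∈ cylE X s v ↔ ∀ l ∈ s, X l ω = v l := Iff.rfl

def vA (i j : ℕ) : ℕ → ℤ := fun l => if l = i then 1 else if l = j then -1 else 0
def vB (m i j : ℕ) : ℕ → ℤ := fun l => if l = m+1 then 1 else vA i j l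
def vC (m i j t : ℕ) : ℕ → ℤ := fun l => if l = m+1 then 1 else if l = m+t then -1 else vA i j l
def vD (m i j : ℕ) : ℕ → ℤ := fun l => if l = m+1 then -1 else vA i j l
def vE (m i j t : ℕ) : ℕ → ℤ := fun l => if l = m+1 then -1 else if l = m+t then 1 else vA i j l

lemma union_eq {Ω : Type*} (X : ℕ → Ω → ℤ)
    (hval : ∀ i ω, X i ω = 0 ∨ X i ω = 1 ∨ X i ω = -1)
    (m i j : ℕ) (hm : 2 ≤ m) (hi1 : 1 < i) (hij : i < j) (hjm : j < m) :
    cylE X (Finset.Icc 1 m) (vA i j) ∩ (⋃ n ∈ Finset.Icc 2 m, contaminatedEvent X m n) =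
      cylE X (Finset.Icc 1 (m+1)) (vA i j) ∪
      (cylE X (Finset.Icc 1 (m+i)) (vB m i j) ∪
      ((⋃ t ∈ Finset.Icc 2 i, cylE X (Finset.Icc 1 (m+j)) (vC m i j t)) ∪
      (cylE X (Finset.Icc 1 (m+j)) (vD m i j) ∪
      (⋃ t ∈ Finset.Icc 2 j, cylE X (Finset.Icc 1 (m+j)) (vE m i j t))))) := by
  have hval' : ∀ (l : ℕ) (ω : Ω), X l ω ≠ 1 → X l ω ≠ -1 → X l ω = 0 := by
    intro l ω hne1 hne2; rcases hval l ω with h|h|h <;> tauto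
  ext ω
  constructor
  · rintro ⟨hE, hU⟩
    simp only [Set.mem_iUnion, exists_prop, contaminatedEvent, Set.mem_setOf_eq] at hU
    obtain ⟨n, hn, hA1, hA2⟩ := hU
    rw [Finset.mem_Icc] at hn
    rw [Finset.card_le_one] at hA1 hA2
    rw [mem_cylE] at hE
    have hEv : ∀ l, 1 ≤ l → l ≤ m → X l ω = vA i j l := fun l h1' h2' =>
      hE l (Finset.mem_Icc.mpr ⟨h1', h2'⟩)
    have hXi : X i ω = 1 := by
      rw [hEv i (by omega) (by omega)]
      simp only [vA]; split_ifs <;> omega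
    have hXj : X j ω = -1 := by
      rw [hEv j (by omega) (by omega)]
      simp only [vA]; split_ifs <;> omega
    rcases hval (m+1) ω with h0' | h1' | h2'
    · -- X (m+1) = 0 : first cylinder
      refine Set.mem_union_left _ ?_
      rw [mem_cylE]
      intro l hl
      rw [Finset.mem_Icc] at hl
      by_cases hlm : l ≤ m
      · exact hEv l hl.1 hlm
      · have hl' : l = m + 1 := by omega
        subst hl'
        rw [h0']
        simp only [vA]; rw [if_neg (by omega), if_neg (by omega)]
    · -- X (m+1) = 1
      have hni : i < n := by
        by_contra hle
        push_neg at hle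
        have e := hA1 i (Finset.mem_filter.mpr ⟨Finset.mem_Icc.mpr ⟨hle, by omega⟩, hXi⟩)
          (m+1) (Finset.mem_filter.mpr ⟨Finset.mem_Icc.mpr ⟨by omega, by omega⟩, h1'⟩)
        omega
      have hone : ∀ l, n ≤ l → l ≤ n+m-1 → X l ω = 1 → l = m+1 := fun l ha hb hx =>
        hA1 l (Finset.mem_filter.mpr ⟨Finset.mem_Icc.mpr ⟨ha, hb⟩, hx⟩)
          (m+1) (Finset.mem_filter.mpr ⟨Finset.mem_Icc.mpr ⟨by omega, by omega⟩, h1'⟩)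
      by_cases hnj : n ≤ j
      · -- second cylinder (vB)
        have hmin : ∀ l, n ≤ l → l ≤ n+m-1 → X l ω = -1 → l = j := fun l ha hb hx =>
          hA2 l (Finset.mem_filter.mpr ⟨Finset.mem_Icc.mpr ⟨ha, hb⟩, hx⟩)
            j (Finset.mem_filter.mpr ⟨Finset.mem_Icc.mpr ⟨hnj, by omega⟩, hXj⟩)
        refine Set.mem_union_right _ (Set.mem_union_left _ ?_)
        rw [mem_cylE]
        intro l hl
        rw [Finset.mem_Icc] at hl
        by_cases hlm : l ≤ m
        · rw [show vB m i j l = vA i j l from by simp only [vB]; rw [if_neg (by omega)]]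
          exact hEv l hl.1 hlm
        · by_cases hl1 : l = m+1
          · subst hl1; rw [h1']; simp only [vB, vA]; split_ifs <;> omega
          · have hv : vB m i j l = 0 := by simp only [vB, vA]; split_ifs <;> omega
            rw [hv]
            refine hval' l ω (fun hx => ?_) (fun hx => ?_)
            · have := hone l (by omega) (by omega) hx; omega
            · have := hmin l (by omega) (by omega) hx; omega
      · push_neg at hnj
        by_cases hex : ∃ t, 2 ≤ t ∧ t ≤ i ∧ X (m+t) ω = -1
        · obtain ⟨t, ht2, hti, hxt⟩ := hex
          refine Set.mem_union_right _ (Set.mem_union_right _ (Set.mem_union_left _ ?_))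
          refine Set.mem_biUnion (Finset.mem_Icc.mpr ⟨ht2, hti⟩) ?_
          rw [mem_cylE]
          intro l hl
          rw [Finset.mem_Icc] at hl
          by_cases hlm : l ≤ m
          · rw [show vC m i j t l = vA i j l from by
              simp only [vC]; rw [if_neg (by omega), if_neg (by omega)]]
            exact hEv l hl.1 hlm
          · by_cases hl1 : l = m+1
            · subst hl1; rw [h1']; simp only [vC, vA]; split_ifs <;> omega
            · by_cases hlt : l = m+t
              · subst hlt; rw [hxt]; simp only [vC, vA]; split_ifs <;> omega
              · have hv : vC m i j t l = 0 := by simp only [vC, vA]; split_ifs <;> omega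
                rw [hv]
                refine hval' l ω (fun hx => ?_) (fun hx => ?_)
                · have := hone l (by omega) (by omega) hx; omega
                · have := hA2 l (Finset.mem_filter.mpr ⟨Finset.mem_Icc.mpr ⟨by omega, by omega⟩, hx⟩)
                    (m+t) (Finset.mem_filter.mpr ⟨Finset.mem_Icc.mpr ⟨by omega, by omega⟩, hxt⟩)
                  omega
        · push_neg at hex
          refine Set.mem_union_right _ (Set.mem_union_left _ ?_)
          rw [mem_cylE]
          intro l hl
          rw [Finset.mem_Icc] at hl
          by_cases hlm : l ≤ m
          · rw [show vB m i j l = vA i j l from by simp only [vB]; rw [if_neg (by omega)]]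
            exact hEv l hl.1 hlm
          · by_cases hl1 : l = m+1
            · subst hl1; rw [h1']; simp only [vB, vA]; split_ifs <;> omega
            · have hv : vB m i j l = 0 := by simp only [vB, vA]; split_ifs <;> omega
              rw [hv]
              refine hval' l ω (fun hx => ?_) (fun hx => ?_)
              · have := hone l (by omega) (by omega) hx; omega
              · have hlb := hex (l - m) (by omega) (by omega)
                rw [show m + (l - m) = l from by omega] at hlb
                exact hlb hx
    · -- X (m+1) = -1
      have hnj : j < n := by
        by_contra hle
        push_neg at hle
        have e := hA2 j (Finset.mem_filter.mpr ⟨Finset.mem_Icc.mpr ⟨hle, by omega⟩, hXj⟩)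
          (m+1) (Finset.mem_filter.mpr ⟨Finset.mem_Icc.mpr ⟨by omega, by omega⟩, h2'⟩)
        omega
      have hminY : ∀ l, n ≤ l → l ≤ n+m-1 → X l ω = -1 → l = m+1 := fun l ha hb hx =>
        hA2 l (Finset.mem_filter.mpr ⟨Finset.mem_Icc.mpr ⟨ha, hb⟩, hx⟩)
          (m+1) (Finset.mem_filter.mpr ⟨Finset.mem_Icc.mpr ⟨by omega, by omega⟩, h2'⟩)
      by_cases hex : ∃ t, 2 ≤ t ∧ t ≤ j ∧ X (m+t) ω = 1
      · obtain ⟨t, ht2, htj, hxt⟩ := hex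
        refine Set.mem_union_right _ (Set.mem_union_right _ (Set.mem_union_right _
          (Set.mem_union_right _ ?_)))
        refine Set.mem_biUnion (Finset.mem_Icc.mpr ⟨ht2, htj⟩) ?_
        rw [mem_cylE]
        intro l hl
        rw [Finset.mem_Icc] at hl
        by_cases hlm : l ≤ m
        · rw [show vE m i j t l = vA i j l from by
            simp only [vE]; rw [if_neg (by omega), if_neg (by omega)]]
          exact hEv l hl.1 hlm
        · by_cases hl1 : l = m+1
          · subst hl1; rw [h2']; simp only [vE, vA]; split_ifs <;> omega
          · by_cases hlt : l = m+t
            · subst hlt; rw [hxt]; simp only [vE, vA]; split_ifs <;> omega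
            · have hv : vE m i j t l = 0 := by simp only [vE, vA]; split_ifs <;> omega
              rw [hv]
              refine hval' l ω (fun hx => ?_) (fun hx => ?_)
              · have := hA1 l (Finset.mem_filter.mpr ⟨Finset.mem_Icc.mpr ⟨by omega, by omega⟩, hx⟩)
                  (m+t) (Finset.mem_filter.mpr ⟨Finset.mem_Icc.mpr ⟨by omega, by omega⟩, hxt⟩)
                omega
              · have := hminY l (by omega) (by omega) hx; omega
      · push_neg at hex
        refine Set.mem_union_right _ (Set.mem_union_right _ (Set.mem_union_right _
          (Set.mem_union_left _ ?_)))
        rw [mem_cylE]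
        intro l hl
        rw [Finset.mem_Icc] at hl
        by_cases hlm : l ≤ m
        · rw [show vD m i j l = vA i j l from by simp only [vD]; rw [if_neg (by omega)]]
          exact hEv l hl.1 hlm
        · by_cases hl1 : l = m+1
          · subst hl1; rw [h2']; simp only [vD, vA]; split_ifs <;> omega
          · have hv : vD m i j l = 0 := by simp only [vD, vA]; split_ifs <;> omega
            rw [hv]
            refine hval' l ω (fun hx => ?_) (fun hx => ?_)
            · have hlb := hex (l - m) (by omega) (by omega)
              rw [show m + (l - m) = l from by omega] at hlb
              exact hlb hx
            · have := hminY l (by omega) (by omega) hx; omega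
  · -- reverse inclusion
    intro hG
    have cardOne : ∀ (N n : ℕ) (v : ℕ → ℤ) (c : ℤ) (w : ℕ), 2 ≤ n → n ≤ m → n + m - 1 ≤ N →
        (∀ l ∈ Finset.Icc 1 N, X l ω = v l) →
        (∀ a, n ≤ a → a ≤ n+m-1 → v a = c → a = w) →
        ((Finset.Icc n (n+m-1)).filter (fun x => X x ω = c)).card ≤ 1 := by
      intro N n v c w hn2 hnm hN hcyl huniq
      rw [Finset.card_le_one]
      intro a ha b hb
      rw [Finset.mem_filter, Finset.mem_Icc] at ha hb
      have hva := hcyl a (Finset.mem_Icc.mpr ⟨by omega, by omega⟩)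
      have hvb := hcyl b (Finset.mem_Icc.mpr ⟨by omega, by omega⟩)
      rw [ha.2] at hva
      rw [hb.2] at hvb
      rw [huniq a ha.1.1 ha.1.2 hva.symm, huniq b hb.1.1 hb.1.2 hvb.symm]
    have memU : ∀ n, 2 ≤ n → n ≤ m →
        ω ∈ contaminatedEvent X m n →
        ω ∈ ⋃ n ∈ Finset.Icc 2 m, contaminatedEvent X m n := by
      intro n h2 h3 hA
      simp only [Set.mem_iUnion, exists_prop]
      exact ⟨n, Finset.mem_Icc.mpr ⟨h2, h3⟩, hA⟩
    rcases hG with h | h | h | h | h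
    · -- from first cylinder, n = 2
      rw [mem_cylE] at h
      refine ⟨fun l hl => h l (by rw [Finset.mem_Icc] at hl ⊢; omega), ?_⟩
      refine memU 2 le_rfl hm ?_
      refine ⟨?_, ?_⟩
      · exact cardOne (m+1) 2 (vA i j) 1 i le_rfl hm (by omega) h
          (fun a ha hb hv => by simp only [vA] at hv; split_ifs at hv <;> omega)
      · exact cardOne (m+1) 2 (vA i j) (-1) j le_rfl hm (by omega) h
          (fun a ha hb hv => by simp only [vA] at hv; split_ifs at hv <;> omega)
    · -- vB cylinder, n = i+1
      rw [mem_cylE] at h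
      refine ⟨fun l hl => ?_, ?_⟩
      · rw [Finset.mem_Icc] at hl
        have := h l (Finset.mem_Icc.mpr ⟨hl.1, by omega⟩)
        rwa [show vB m i j l = vA i j l from by simp only [vB]; rw [if_neg (by omega)]] at this
      refine memU (i+1) (by omega) (by omega) ?_
      refine ⟨?_, ?_⟩
      · exact cardOne (m+i) (i+1) (vB m i j) 1 (m+1) (by omega) (by omega) (by omega) h
          (fun a ha hb hv => by simp only [vB, vA] at hv; split_ifs at hv <;> omega)
      · exact cardOne (m+i) (i+1) (vB m i j) (-1) j (by omega) (by omega) (by omega) h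
          (fun a ha hb hv => by simp only [vB, vA] at hv; split_ifs at hv <;> omega)
    · -- vC cylinders, n = j+1
      simp only [Set.mem_iUnion, exists_prop] at h
      obtain ⟨t, ht, h⟩ := h
      rw [Finset.mem_Icc] at ht
      rw [mem_cylE] at h
      refine ⟨fun l hl => ?_, ?_⟩
      · rw [Finset.mem_Icc] at hl
        have := h l (Finset.mem_Icc.mpr ⟨hl.1, by omega⟩)
        rwa [show vC m i j t l = vA i j l from by
          simp only [vC]; rw [if_neg (by omega), if_neg (by omega)]] at this
      refine memU (j+1) (by omega) (by omega) ?_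
      refine ⟨?_, ?_⟩
      · exact cardOne (m+j) (j+1) (vC m i j t) 1 (m+1) (by omega) (by omega) (by omega) h
          (fun a ha hb hv => by simp only [vC, vA] at hv; split_ifs at hv <;> omega)
      · exact cardOne (m+j) (j+1) (vC m i j t) (-1) (m+t) (by omega) (by omega) (by omega) h
          (fun a ha hb hv => by simp only [vC, vA] at hv; split_ifs at hv <;> omega)
    · -- vD cylinder, n = j+1
      rw [mem_cylE] at h
      refine ⟨fun l hl => ?_, ?_⟩
      · rw [Finset.mem_Icc] at hl
        have := h l (Finset.mem_Icc.mpr ⟨hl.1, by omega⟩)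
        rwa [show vD m i j l = vA i j l from by simp only [vD]; rw [if_neg (by omega)]] at this
      refine memU (j+1) (by omega) (by omega) ?_
      refine ⟨?_, ?_⟩
      · exact cardOne (m+j) (j+1) (vD m i j) 1 (m+1) (by omega) (by omega) (by omega) h
          (fun a ha hb hv => by simp only [vD, vA] at hv; split_ifs at hv <;> omega)
      · exact cardOne (m+j) (j+1) (vD m i j) (-1) (m+1) (by omega) (by omega) (by omega) h
          (fun a ha hb hv => by simp only [vD, vA] at hv; split_ifs at hv <;> omega)
    · -- vE cylinders, n = j+1
      simp only [Set.mem_iUnion, exists_prop] at h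
      obtain ⟨t, ht, h⟩ := h
      rw [Finset.mem_Icc] at ht
      rw [mem_cylE] at h
      refine ⟨fun l hl => ?_, ?_⟩
      · rw [Finset.mem_Icc] at hl
        have := h l (Finset.mem_Icc.mpr ⟨hl.1, by omega⟩)
        rwa [show vE m i j t l = vA i j l from by
          simp only [vE]; rw [if_neg (by omega), if_neg (by omega)]] at this
      refine memU (j+1) (by omega) (by omega) ?_
      refine ⟨?_, ?_⟩
      · exact cardOne (m+j) (j+1) (vE m i j t) 1 (m+t) (by omega) (by omega) (by omega) h
          (fun a ha hb hv => by simp only [vE, vA] at hv; split_ifs at hv <;> omega)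
      · exact cardOne (m+j) (j+1) (vE m i j t) (-1) (m+1) (by omega) (by omega) (by omega) h
          (fun a ha hb hv => by simp only [vE, vA] at hv; split_ifs at hv <;> omega)

lemma cylE_eq {Ω : Type*} (X : ℕ → Ω → ℤ) (s : Finset ℕ) (v : ℕ → ℤ) :
    cylE X s v = ⋂ l ∈ s, X l ⁻¹' {v l} := by
  ext ω; simp [cylE]

lemma measurableSet_cylE {Ω : Type*} [MeasurableSpace Ω] {X : ℕ → Ω → ℤ}
    (hX : ∀ i, Measurable (X i)) (s : Finset ℕ) (v : ℕ → ℤ) :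
    MeasurableSet (cylE X s v) := by
  rw [cylE_eq]
  exact MeasurableSet.biInter s.countable_toSet fun l _ => (hX l) (measurableSet_singleton _)

lemma meas_cylE {Ω : Type*} [MeasurableSpace Ω] {X : ℕ → Ω → ℤ} (P : Measure Ω)
    (hindep : iIndepFun X P) (s : Finset ℕ) (v : ℕ → ℤ) :
    P (cylE X s v) = ∏ l ∈ s, P {ω | X l ω = v l} := by
  rw [cylE_eq]
  exact hindep.meas_biInter (S := s) (s := fun l => X l ⁻¹' {v l})
    (fun l _ => ⟨{v l}, measurableSet_singleton _, rfl⟩)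

lemma disjoint_cylE {Ω : Type*} {X : ℕ → Ω → ℤ} {s1 s2 : Finset ℕ} {w1 w2 : ℕ → ℤ} (l : ℕ)
    (h1 : l ∈ s1) (h2 : l ∈ s2) (hne : w1 l ≠ w2 l) :
    Disjoint (cylE X s1 w1) (cylE X s2 w2) := by
  rw [Set.disjoint_left]
  intro ω ha hb
  exact hne ((ha l h1).symm.trans (hb l h2))

lemma prod_const_except (s t : Finset ℕ) (hts : t ⊆ s) (f : ℕ → ENNReal) (c : ENNReal)
    (h : ∀ l ∈ s, l ∉ t → f l = c) :
    ∏ l ∈ s, f l = (∏ l ∈ t, f l) * c ^ (s.card - t.card) := by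
  rw [← Finset.prod_sdiff hts,
    Finset.prod_congr rfl (fun l hl => h l (Finset.mem_sdiff.mp hl).1 (Finset.mem_sdiff.mp hl).2),
    Finset.prod_const, Finset.card_sdiff_of_subset hts, mul_comm]

lemma meas_cylE_Icc {Ω : Type*} [MeasurableSpace Ω] (P : Measure Ω) {X : ℕ → Ω → ℤ}
    (hindep : iIndepFun X P) {p : ℝ}
    (h0 : ∀ i, P {ω | X i ω = 0} = ENNReal.ofReal p)
    (N : ℕ) (v : ℕ → ℤ) (T : Finset ℕ) (hT : T ⊆ Finset.Icc 1 N)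
    (hzero : ∀ l ∈ Finset.Icc 1 N, l ∉ T → v l = 0) :
    P (cylE X (Finset.Icc 1 N) v)
      = (∏ l ∈ T, P {ω | X l ω = v l}) * (ENNReal.ofReal p) ^ (N - T.card) := by
  rw [meas_cylE P hindep,
    prod_const_except (Finset.Icc 1 N) T hT _ (ENNReal.ofReal p)
      (fun l hl hlT => by rw [show v l = 0 from hzero l hl hlT]; exact h0 l),
    show (Finset.Icc 1 N).card = N from by simp]

theorem Y_two_middle_middle
    {Ω : Type*} [MeasurableSpace Ω] (P : Measure Ω) [IsProbabilityMeasure P]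
    (X : ℕ → Ω → ℤ) (hmeas : ∀ i, Measurable (X i))
    (hindep : iIndepFun X P)
    (p q1 q2 : ℝ) (hp : 0 < p) (hq1 : 0 < q1) (hq2 : 0 < q2) (hsum : p + q1 + q2 = 1)
    (h0 : ∀ i, P {ω | X i ω = 0} = ENNReal.ofReal p)
    (h1 : ∀ i, P {ω | X i ω = 1} = ENNReal.ofReal q1)
    (h2 : ∀ i, P {ω | X i ω = -1} = ENNReal.ofReal q2)
    (hval : ∀ i ω, X i ω = 0 ∨ X i ω = 1 ∨ X i ω = -1)
    (m i j : ℕ) (hm : 2 ≤ m) (hi1 : 1 < i) (hij : i < j) (hjm : j < m) :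
    (P (twoEvent X m i j ∩ ⋂ n ∈ Finset.Icc 2 m, (contaminatedEvent X m n)ᶜ)).toReal =
      q1 * q2 * p ^ (m - 2) *
        (q1 * (1 - p ^ (i - 1) - ((i : ℝ) - 1) * p ^ (i - 2) * q2 * p ^ (j - i)) +
         q2 * (1 - p ^ (j - 1) - ((j : ℝ) - 1) * q1 * p ^ (j - 2))) := by

  classical
  have hBU := union_eq X hval m i j hm hi1 hij hjm
  -- names for the pieces
  set E0 : Set Ω := cylE X (Finset.Icc 1 m) (vA i j) with hE0def
  set C1 : Set Ω := cylE X (Finset.Icc 1 (m+1)) (vA i j) with hC1def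
  set C2 : Set Ω := cylE X (Finset.Icc 1 (m+i)) (vB m i j) with hC2def
  set C3 : Set Ω := ⋃ t ∈ Finset.Icc 2 i, cylE X (Finset.Icc 1 (m+j)) (vC m i j t) with hC3def
  set C4 : Set Ω := cylE X (Finset.Icc 1 (m+j)) (vD m i j) with hC4def
  set C5 : Set Ω := ⋃ t ∈ Finset.Icc 2 j, cylE X (Finset.Icc 1 (m+j)) (vE m i j t) with hC5def
  have htwo : twoEvent X m i j = E0 := by
    rw [hE0def]
    ext ω
    simp only [twoEvent, Set.mem_setOf_eq, mem_cylE]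
    constructor
    · rintro ⟨ha, hb, hc⟩
      intro l hl
      rw [Finset.mem_Icc] at hl
      by_cases hli : l = i
      · subst hli; rw [ha]; simp only [vA]; split_ifs <;> omega
      by_cases hlj : l = j
      · subst hlj; rw [hb]; simp only [vA]; split_ifs <;> omega
      · rw [hc l (Finset.mem_Icc.mpr hl) hli hlj]; simp only [vA]; split_ifs <;> omega
    · intro h
      refine ⟨?_, ?_, ?_⟩
      · rw [h i (Finset.mem_Icc.mpr ⟨by omega, by omega⟩)]; simp only [vA]
        split_ifs <;> omega
      · rw [h j (Finset.mem_Icc.mpr ⟨by omega, by omega⟩)]; simp only [vA]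
        split_ifs <;> omega
      · intro l hl hli hlj
        rw [h l hl]; simp only [vA]; split_ifs <;> omega
  have hGsub : C1 ∪ (C2 ∪ (C3 ∪ (C4 ∪ C5))) ⊆ E0 := by
    rw [← hBU]; exact Set.inter_subset_left
  have hsplit : twoEvent X m i j ∩ (⋂ n ∈ Finset.Icc 2 m, (contaminatedEvent X m n)ᶜ)
      = E0 \ (C1 ∪ (C2 ∪ (C3 ∪ (C4 ∪ C5)))) := by
    rw [htwo]
    ext ω
    simp only [Set.mem_inter_iff, Set.mem_iInter, Set.mem_compl_iff, Set.mem_diff]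
    constructor
    · rintro ⟨hE, hC⟩
      refine ⟨hE, fun hG => ?_⟩
      have hmem : ω ∈ E0 ∩ ⋃ n ∈ Finset.Icc 2 m, contaminatedEvent X m n := by
        rw [hBU]; exact hG
      obtain ⟨-, hU⟩ := hmem
      simp only [Set.mem_iUnion, exists_prop] at hU
      obtain ⟨n, hn, hA⟩ := hU
      exact hC n hn hA
    · rintro ⟨hE, hG⟩
      refine ⟨hE, fun n hn hA => hG ?_⟩
      rw [← hBU]
      exact ⟨hE, Set.mem_biUnion hn hA⟩
  -- measurability
  have mE0 : MeasurableSet E0 := by rw [hE0def]; exact measurableSet_cylE hmeas _ _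
  have mC1 : MeasurableSet C1 := by rw [hC1def]; exact measurableSet_cylE hmeas _ _
  have mC2 : MeasurableSet C2 := by rw [hC2def]; exact measurableSet_cylE hmeas _ _
  have mC3 : MeasurableSet C3 := by
    rw [hC3def]
    exact (Finset.Icc 2 i).measurableSet_biUnion (fun t _ => measurableSet_cylE hmeas _ _)
  have mC4 : MeasurableSet C4 := by rw [hC4def]; exact measurableSet_cylE hmeas _ _
  have mC5 : MeasurableSet C5 := by
    rw [hC5def]
    exact (Finset.Icc 2 j).measurableSet_biUnion (fun t _ => measurableSet_cylE hmeas _ _)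
  -- disjointness
  have d1 : Disjoint C1 (C2 ∪ (C3 ∪ (C4 ∪ C5))) := by
    rw [hC1def, hC2def, hC3def, hC4def, hC5def]
    refine Set.disjoint_union_right.mpr ⟨?_, Set.disjoint_union_right.mpr
      ⟨?_, Set.disjoint_union_right.mpr ⟨?_, ?_⟩⟩⟩
    · exact disjoint_cylE (m+1) (Finset.mem_Icc.mpr ⟨by omega, by omega⟩)
        (Finset.mem_Icc.mpr ⟨by omega, by omega⟩)
        (by simp only [vA, vB]; split_ifs <;> omega)
    · simp only [Set.disjoint_iUnion_right]
      intro t ht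
      rw [Finset.mem_Icc] at ht
      exact disjoint_cylE (m+1) (Finset.mem_Icc.mpr ⟨by omega, by omega⟩)
        (Finset.mem_Icc.mpr ⟨by omega, by omega⟩)
        (by simp only [vA, vC]; split_ifs <;> omega)
    · exact disjoint_cylE (m+1) (Finset.mem_Icc.mpr ⟨by omega, by omega⟩)
        (Finset.mem_Icc.mpr ⟨by omega, by omega⟩)
        (by simp only [vA, vD]; split_ifs <;> omega)
    · simp only [Set.disjoint_iUnion_right]
      intro t ht
      rw [Finset.mem_Icc] at ht
      exact disjoint_cylE (m+1) (Finset.mem_Icc.mpr ⟨by omega, by omega⟩)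
        (Finset.mem_Icc.mpr ⟨by omega, by omega⟩)
        (by simp only [vA, vE]; split_ifs <;> omega)
  have d2 : Disjoint C2 (C3 ∪ (C4 ∪ C5)) := by
    rw [hC2def, hC3def, hC4def, hC5def]
    refine Set.disjoint_union_right.mpr ⟨?_, Set.disjoint_union_right.mpr ⟨?_, ?_⟩⟩
    · simp only [Set.disjoint_iUnion_right]
      intro t ht
      rw [Finset.mem_Icc] at ht
      exact disjoint_cylE (m+t) (Finset.mem_Icc.mpr ⟨by omega, by omega⟩)
        (Finset.mem_Icc.mpr ⟨by omega, by omega⟩)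
        (by simp only [vA, vB, vC]; split_ifs <;> omega)
    · exact disjoint_cylE (m+1) (Finset.mem_Icc.mpr ⟨by omega, by omega⟩)
        (Finset.mem_Icc.mpr ⟨by omega, by omega⟩)
        (by simp only [vB, vD]; split_ifs <;> omega)
    · simp only [Set.disjoint_iUnion_right]
      intro t ht
      rw [Finset.mem_Icc] at ht
      exact disjoint_cylE (m+1) (Finset.mem_Icc.mpr ⟨by omega, by omega⟩)
        (Finset.mem_Icc.mpr ⟨by omega, by omega⟩)
        (by simp only [vB, vE]; split_ifs <;> omega)
  have d3 : Disjoint C3 (C4 ∪ C5) := by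
    rw [hC3def, hC4def, hC5def]
    simp only [Set.disjoint_iUnion_left]
    intro t ht
    rw [Finset.mem_Icc] at ht
    refine Set.disjoint_union_right.mpr ⟨?_, ?_⟩
    · exact disjoint_cylE (m+1) (Finset.mem_Icc.mpr ⟨by omega, by omega⟩)
        (Finset.mem_Icc.mpr ⟨by omega, by omega⟩)
        (by simp only [vC, vD]; split_ifs <;> omega)
    · simp only [Set.disjoint_iUnion_right]
      intro s hs
      rw [Finset.mem_Icc] at hs
      exact disjoint_cylE (m+1) (Finset.mem_Icc.mpr ⟨by omega, by omega⟩)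
        (Finset.mem_Icc.mpr ⟨by omega, by omega⟩)
        (by simp only [vC, vE]; split_ifs <;> omega)
  have d4 : Disjoint C4 C5 := by
    rw [hC4def, hC5def]
    simp only [Set.disjoint_iUnion_right]
    intro t ht
    rw [Finset.mem_Icc] at ht
    exact disjoint_cylE (m+t) (Finset.mem_Icc.mpr ⟨by omega, by omega⟩)
      (Finset.mem_Icc.mpr ⟨by omega, by omega⟩)
      (by simp only [vD, vE, vA]; split_ifs <;> omega)
  -- measures of the pieces
  have hPE0 : P E0 = ENNReal.ofReal (q1 * (q2 * p ^ (m-2))) := by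
    rw [hE0def, meas_cylE_Icc P hindep h0 m (vA i j) {i, j}
      (fun x hx => by
        simp only [Finset.mem_insert, Finset.mem_singleton] at hx
        rw [Finset.mem_Icc]; omega)
      (fun l hl hlT => by
        simp only [Finset.mem_insert, Finset.mem_singleton] at hlT
        push_neg at hlT
        simp only [vA]; split_ifs <;> omega)]
    rw [Finset.prod_pair (show i ≠ j by omega),
      show vA i j i = 1 from by simp only [vA]; split_ifs <;> omega,
      show vA i j j = -1 from by simp only [vA]; split_ifs <;> omega,
      h1 i, h2 j,
      show ({i, j} : Finset ℕ).card = 2 from by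
        rw [Finset.card_insert_of_notMem (by simp only [Finset.mem_singleton]; omega),
          Finset.card_singleton],
      ENNReal.ofReal_mul hq1.le, ENNReal.ofReal_mul hq2.le, ENNReal.ofReal_pow hp.le]
    ring
  have hPC1 : P C1 = ENNReal.ofReal (q1 * (q2 * p ^ (m-1))) := by
    rw [hC1def, meas_cylE_Icc P hindep h0 (m+1) (vA i j) {i, j}
      (fun x hx => by
        simp only [Finset.mem_insert, Finset.mem_singleton] at hx
        rw [Finset.mem_Icc]; omega)
      (fun l hl hlT => by
        simp only [Finset.mem_insert, Finset.mem_singleton] at hlT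
        push_neg at hlT
        simp only [vA]; split_ifs <;> omega)]
    rw [Finset.prod_pair (show i ≠ j by omega),
      show vA i j i = 1 from by simp only [vA]; split_ifs <;> omega,
      show vA i j j = -1 from by simp only [vA]; split_ifs <;> omega,
      h1 i, h2 j,
      show ({i, j} : Finset ℕ).card = 2 from by
        rw [Finset.card_insert_of_notMem (by simp only [Finset.mem_singleton]; omega),
          Finset.card_singleton],
      show m + 1 - 2 = m - 1 from by omega,
      ENNReal.ofReal_mul hq1.le, ENNReal.ofReal_mul hq2.le, ENNReal.ofReal_pow hp.le]
    ring
  have hPC2 : P C2 = ENNReal.ofReal (q1 * (q2 * (q1 * p ^ (m+i-3)))) := by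
    have n1 : i ∉ ({j, m+1} : Finset ℕ) := by
      simp only [Finset.mem_insert, Finset.mem_singleton]; omega
    have n2 : j ∉ ({m+1} : Finset ℕ) := by
      simp only [Finset.mem_singleton]; omega
    rw [hC2def, meas_cylE_Icc P hindep h0 (m+i) (vB m i j) {i, j, m+1}
      (fun x hx => by
        simp only [Finset.mem_insert, Finset.mem_singleton] at hx
        rw [Finset.mem_Icc]; omega)
      (fun l hl hlT => by
        simp only [Finset.mem_insert, Finset.mem_singleton] at hlT
        push_neg at hlT
        simp only [vB, vA]; split_ifs <;> omega)]
    rw [Finset.prod_insert n1, Finset.prod_insert n2, Finset.prod_singleton,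
      show vB m i j i = 1 from by simp only [vB, vA]; split_ifs <;> omega,
      show vB m i j j = -1 from by simp only [vB, vA]; split_ifs <;> omega,
      show vB m i j (m+1) = 1 from by simp only [vB, vA]; split_ifs <;> omega,
      h1 i, h2 j, h1 (m+1),
      show ({i, j, m+1} : Finset ℕ).card = 3 from by
        rw [Finset.card_insert_of_notMem n1, Finset.card_insert_of_notMem n2,
          Finset.card_singleton],
      ENNReal.ofReal_mul hq1.le, ENNReal.ofReal_mul hq2.le, ENNReal.ofReal_mul hq1.le,
      ENNReal.ofReal_pow hp.le]
    ring
  have hPC4 : P C4 = ENNReal.ofReal (q1 * (q2 * (q2 * p ^ (m+j-3)))) := by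
    have n1 : i ∉ ({j, m+1} : Finset ℕ) := by
      simp only [Finset.mem_insert, Finset.mem_singleton]; omega
    have n2 : j ∉ ({m+1} : Finset ℕ) := by
      simp only [Finset.mem_singleton]; omega
    rw [hC4def, meas_cylE_Icc P hindep h0 (m+j) (vD m i j) {i, j, m+1}
      (fun x hx => by
        simp only [Finset.mem_insert, Finset.mem_singleton] at hx
        rw [Finset.mem_Icc]; omega)
      (fun l hl hlT => by
        simp only [Finset.mem_insert, Finset.mem_singleton] at hlT
        push_neg at hlT
        simp only [vD, vA]; split_ifs <;> omega)]
    rw [Finset.prod_insert n1, Finset.prod_insert n2, Finset.prod_singleton,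
      show vD m i j i = 1 from by simp only [vD, vA]; split_ifs <;> omega,
      show vD m i j j = -1 from by simp only [vD, vA]; split_ifs <;> omega,
      show vD m i j (m+1) = -1 from by simp only [vD, vA]; split_ifs <;> omega,
      h1 i, h2 j, h2 (m+1),
      show ({i, j, m+1} : Finset ℕ).card = 3 from by
        rw [Finset.card_insert_of_notMem n1, Finset.card_insert_of_notMem n2,
          Finset.card_singleton],
      ENNReal.ofReal_mul hq1.le, ENNReal.ofReal_mul hq2.le, ENNReal.ofReal_mul hq2.le,
      ENNReal.ofReal_pow hp.le]
    ring
  have onecylC : ∀ t, 2 ≤ t → t ≤ j →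
      P (cylE X (Finset.Icc 1 (m+j)) (vC m i j t))
        = ENNReal.ofReal (q1 * (q2 * (q1 * (q2 * p ^ (m+j-4))))) := by
    intro t ht2 htj
    have n1 : i ∉ ({j, m+1, m+t} : Finset ℕ) := by
      simp only [Finset.mem_insert, Finset.mem_singleton]; omega
    have n2 : j ∉ ({m+1, m+t} : Finset ℕ) := by
      simp only [Finset.mem_insert, Finset.mem_singleton]; omega
    have n3 : m+1 ∉ ({m+t} : Finset ℕ) := by
      simp only [Finset.mem_singleton]; omega
    rw [meas_cylE_Icc P hindep h0 (m+j) (vC m i j t) {i, j, m+1, m+t}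
      (fun x hx => by
        simp only [Finset.mem_insert, Finset.mem_singleton] at hx
        rw [Finset.mem_Icc]; omega)
      (fun l hl hlT => by
        simp only [Finset.mem_insert, Finset.mem_singleton] at hlT
        push_neg at hlT
        simp only [vC, vA]; split_ifs <;> omega)]
    rw [Finset.prod_insert n1, Finset.prod_insert n2, Finset.prod_insert n3,
      Finset.prod_singleton,
      show vC m i j t i = 1 from by simp only [vC, vA]; split_ifs <;> omega,
      show vC m i j t j = -1 from by simp only [vC, vA]; split_ifs <;> omega,
      show vC m i j t (m+1) = 1 from by simp only [vC, vA]; split_ifs <;> omega,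
      show vC m i j t (m+t) = -1 from by simp only [vC, vA]; split_ifs <;> omega,
      h1 i, h2 j, h1 (m+1), h2 (m+t),
      show ({i, j, m+1, m+t} : Finset ℕ).card = 4 from by
        rw [Finset.card_insert_of_notMem n1, Finset.card_insert_of_notMem n2,
          Finset.card_insert_of_notMem n3, Finset.card_singleton],
      ENNReal.ofReal_mul hq1.le, ENNReal.ofReal_mul hq2.le, ENNReal.ofReal_mul hq1.le,
      ENNReal.ofReal_mul hq2.le, ENNReal.ofReal_pow hp.le]
    ring
  have onecylE : ∀ t, 2 ≤ t → t ≤ j →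
      P (cylE X (Finset.Icc 1 (m+j)) (vE m i j t))
        = ENNReal.ofReal (q1 * (q2 * (q1 * (q2 * p ^ (m+j-4))))) := by
    intro t ht2 htj
    have n1 : i ∉ ({j, m+1, m+t} : Finset ℕ) := by
      simp only [Finset.mem_insert, Finset.mem_singleton]; omega
    have n2 : j ∉ ({m+1, m+t} : Finset ℕ) := by
      simp only [Finset.mem_insert, Finset.mem_singleton]; omega
    have n3 : m+1 ∉ ({m+t} : Finset ℕ) := by
      simp only [Finset.mem_singleton]; omega
    rw [meas_cylE_Icc P hindep h0 (m+j) (vE m i j t) {i, j, m+1, m+t}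
      (fun x hx => by
        simp only [Finset.mem_insert, Finset.mem_singleton] at hx
        rw [Finset.mem_Icc]; omega)
      (fun l hl hlT => by
        simp only [Finset.mem_insert, Finset.mem_singleton] at hlT
        push_neg at hlT
        simp only [vE, vA]; split_ifs <;> omega)]
    rw [Finset.prod_insert n1, Finset.prod_insert n2, Finset.prod_insert n3,
      Finset.prod_singleton,
      show vE m i j t i = 1 from by simp only [vE, vA]; split_ifs <;> omega,
      show vE m i j t j = -1 from by simp only [vE, vA]; split_ifs <;> omega,
      show vE m i j t (m+1) = -1 from by simp only [vE, vA]; split_ifs <;> omega,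
      show vE m i j t (m+t) = 1 from by simp only [vE, vA]; split_ifs <;> omega,
      h1 i, h2 j, h2 (m+1), h1 (m+t),
      show ({i, j, m+1, m+t} : Finset ℕ).card = 4 from by
        rw [Finset.card_insert_of_notMem n1, Finset.card_insert_of_notMem n2,
          Finset.card_insert_of_notMem n3, Finset.card_singleton],
      ENNReal.ofReal_mul hq1.le, ENNReal.ofReal_mul hq2.le, ENNReal.ofReal_mul hq1.le,
      ENNReal.ofReal_mul hq2.le, ENNReal.ofReal_pow hp.le]
    ring
  have hPC3 : P C3 = (i - 1 : ℕ) * ENNReal.ofReal (q1 * (q2 * (q1 * (q2 * p ^ (m+j-4))))) := by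
    rw [hC3def, measure_biUnion_finset
      (fun a ha b hb hab => by
        simp only [Finset.coe_Icc, Set.mem_Icc] at ha hb
        exact disjoint_cylE (m+a) (Finset.mem_Icc.mpr ⟨by omega, by omega⟩)
          (Finset.mem_Icc.mpr ⟨by omega, by omega⟩)
          (by simp only [vC, vA]; split_ifs <;> omega))
      (fun t _ => measurableSet_cylE hmeas _ _),
      Finset.sum_congr rfl (fun t ht => onecylC t (Finset.mem_Icc.mp ht).1
        (by have := (Finset.mem_Icc.mp ht).2; omega)),
      Finset.sum_const, Nat.card_Icc, nsmul_eq_mul,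
      show i + 1 - 2 = i - 1 from by omega]
  have hPC5 : P C5 = (j - 1 : ℕ) * ENNReal.ofReal (q1 * (q2 * (q1 * (q2 * p ^ (m+j-4))))) := by
    rw [hC5def, measure_biUnion_finset
      (fun a ha b hb hab => by
        simp only [Finset.coe_Icc, Set.mem_Icc] at ha hb
        exact disjoint_cylE (m+a) (Finset.mem_Icc.mpr ⟨by omega, by omega⟩)
          (Finset.mem_Icc.mpr ⟨by omega, by omega⟩)
          (by simp only [vE, vA]; split_ifs <;> omega))
      (fun t _ => measurableSet_cylE hmeas _ _),
      Finset.sum_congr rfl (fun t ht => onecylE t (Finset.mem_Icc.mp ht).1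
        (Finset.mem_Icc.mp ht).2),
      Finset.sum_const, Nat.card_Icc, nsmul_eq_mul,
      show j + 1 - 2 = j - 1 from by omega]
  -- assemble
  have hPG : P (C1 ∪ (C2 ∪ (C3 ∪ (C4 ∪ C5)))) = ENNReal.ofReal
      (q1 * (q2 * p ^ (m-1)) + (q1 * (q2 * (q1 * p ^ (m+i-3)))
        + ((i-1 : ℕ) * (q1 * (q2 * (q1 * (q2 * p ^ (m+j-4)))))
        + (q1 * (q2 * (q2 * p ^ (m+j-3)))
        + (j-1 : ℕ) * (q1 * (q2 * (q1 * (q2 * p ^ (m+j-4))))))))) := by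
    rw [measure_union d1 (mC2.union (mC3.union (mC4.union mC5))),
      measure_union d2 (mC3.union (mC4.union mC5)),
      measure_union d3 (mC4.union mC5),
      measure_union d4 mC5,
      hPC1, hPC2, hPC3, hPC4, hPC5]
    have e3 : ((i - 1 : ℕ) : ENNReal) * ENNReal.ofReal (q1 * (q2 * (q1 * (q2 * p ^ (m+j-4)))))
        = ENNReal.ofReal ((i-1 : ℕ) * (q1 * (q2 * (q1 * (q2 * p ^ (m+j-4)))))) := by
      rw [ENNReal.ofReal_mul (Nat.cast_nonneg _), ENNReal.ofReal_natCast]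
    have e5 : ((j - 1 : ℕ) : ENNReal) * ENNReal.ofReal (q1 * (q2 * (q1 * (q2 * p ^ (m+j-4)))))
        = ENNReal.ofReal ((j-1 : ℕ) * (q1 * (q2 * (q1 * (q2 * p ^ (m+j-4)))))) := by
      rw [ENNReal.ofReal_mul (Nat.cast_nonneg _), ENNReal.ofReal_natCast]
    rw [e3, e5, ← ENNReal.ofReal_add (by positivity) (by positivity),
      ← ENNReal.ofReal_add (by positivity) (by positivity),
      ← ENNReal.ofReal_add (by positivity) (by positivity),
      ← ENNReal.ofReal_add (by positivity) (by positivity)]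
  -- final computation
  rw [hsplit, measure_diff hGsub (mC1.union (mC2.union (mC3.union (mC4.union mC5)))).nullMeasurableSet
      (measure_ne_top P _),
    ENNReal.toReal_sub_of_le (measure_mono hGsub) (measure_ne_top P E0),
    hPE0, hPG, ENNReal.toReal_ofReal (by positivity), ENNReal.toReal_ofReal (by positivity)]
  rw [Nat.cast_sub (show 1 ≤ i by omega), Nat.cast_sub (show 1 ≤ j by omega), Nat.cast_one]
  rw [show m - 1 = (m-2) + 1 from by omega,
    show m + i - 3 = (m-2) + ((i-2) + 1) from by omega,
    show m + j - 4 = (m-2) + ((i-2) + (j-i)) from by omega,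
    show m + j - 3 = (m-2) + ((i-2) + (j-i) + 1) from by omega,
    show i - 1 = (i-2) + 1 from by omega,
    show j - 1 = (i-2) + (j-i) + 1 from by omega,
    show j - 2 = (i-2) + (j-i) from by omega]
  simp only [pow_add, pow_one]
  linear_combination (-(q1 * q2 * p ^ (m-2))) * hsum
end
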